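/- arXiv:math/0511172 — 2 statements merged into one kernel-verified Lean document; each statement's English description precedes it below -/
import Mathlib

section
/- Let ξ ∈ 𝔸 with k_∅(ξ)=k>0, let θ be any representative of ξ, and let {ξ¹,…,ξ^k}={𝔭(τ_1θ),…,𝔭(τ_kθ)} be the unordered family of subtrees of ξ above the first generation. Then for every symmetric measurable function F:𝒜^k → ℝ₊, (#𝔭^{-1}(ξ))^{-1} Σ_{θ∈𝔭^{-1}(ξ)} F(τ_1θ,…,τ_kθ) = (#𝔭^{-1}(ξ¹))^{-1}⋯(#𝔭^{-1}(ξ^k))^{-1} Σ_{θ_1∈𝔭^{-1}(ξ¹)}⋯Σ_{θ_k∈𝔭^{-1}(ξ^k)} F(θ_1,…,θ_k). -/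
open MeasureTheory Metric Set
open scoped ENNReal NNReal Topology Classical

noncomputable section

/-! ### Pointed (rooted) compact metric spaces and the Gromov–Hausdorff space -/

/-- A rooted compact metric space. -/
structure PCMS where
  carrier : Type
  met : MetricSpace carrier
  cpt : CompactSpace carrier
  root : carrier

attribute [instance] PCMS.met PCMS.cpt

instance (X : PCMS) : Nonempty X.carrier := ⟨X.root⟩

/-- Two rooted compact metric spaces are equivalent if there is a root-preserving
isometry mapping one onto the other. -/
instance pcmsSetoid : Setoid PCMS where
  r X Y := ∃ e : X.carrier ≃ᵢ Y.carrier, e X.root = Y.root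
  iseqv := by
    refine ⟨fun X => ⟨IsometryEquiv.refl _, rfl⟩, ?_, ?_⟩
    · rintro X Y ⟨e, he⟩
      exact ⟨e.symm, by rw [← he, IsometryEquiv.symm_apply_apply]⟩
    · rintro X Y Z ⟨e, he⟩ ⟨f, hf⟩
      exact ⟨e.trans f, by simp [IsometryEquiv.trans_apply, he, hf]⟩

/-- The space of equivalence classes of rooted compact metric spaces. -/
abbrev MT := Quotient pcmsSetoid

def PCMS.toMT (X : PCMS) : MT := Quotient.mk pcmsSetoid X

/-- The pointed Gromov–Hausdorff distance: infimum, over all isometric embeddings of the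
two spaces into a common metric space, of the maximum of the Hausdorff distance between
the images and the distance between the images of the roots. -/
def pghDist (X Y : PCMS) : ℝ :=
  sInf { r : ℝ |
    ∃ (E : Type) (_ : MetricSpace E) (f : X.carrier → E) (g : Y.carrier → E),
      Isometry f ∧ Isometry g ∧
      max (hausdorffDist (Set.range f) (Set.range g)) (dist (f X.root) (g Y.root)) ≤ r }

/-- The pointed Gromov–Hausdorff distance on equivalence classes. -/
def mGH (x y : MT) : ℝ := pghDist x.out y.out

/-- The Borel σ-field of the pointed Gromov–Hausdorff distance. -/
instance : MeasurableSpace MT :=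
  MeasurableSpace.generateFrom { s : Set MT | ∃ y r, s = { x | mGH x y < r } }

/-- The height of a rooted compact metric space: the maximal distance from the root. -/
def PCMS.height (X : PCMS) : ℝ := ⨆ σ : X.carrier, dist X.root σ

/-- The real-tree property: any two points are joined by a unique isometric arc, and any
injective continuous path between them has the same range as this arc. -/
def PCMS.IsRTree (X : PCMS) : Prop :=
  ∀ x y : X.carrier,
    (∃! f : Set.Icc (0 : ℝ) (dist x y) → X.carrier,
        Isometry f ∧ f ⟨0, Set.left_mem_Icc.mpr dist_nonneg⟩ = x ∧
          f ⟨dist x y, Set.right_mem_Icc.mpr dist_nonneg⟩ = y) ∧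
    (∀ f : Set.Icc (0 : ℝ) (dist x y) → X.carrier,
        Isometry f → f ⟨0, Set.left_mem_Icc.mpr dist_nonneg⟩ = x →
        f ⟨dist x y, Set.right_mem_Icc.mpr dist_nonneg⟩ = y →
      ∀ q : Set.Icc (0 : ℝ) 1 → X.carrier, Continuous q → Function.Injective q →
        q ⟨0, Set.left_mem_Icc.mpr zero_le_one⟩ = x →
        q ⟨1, Set.right_mem_Icc.mpr zero_le_one⟩ = y →
        Set.range q = Set.range f)

def IsTreeClass (x : MT) : Prop := ∃ X : PCMS, X.IsRTree ∧ X.toMT = x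

/-- The space `𝕋` of equivalence classes of rooted compact real trees. -/
abbrev TT := { x : MT // IsTreeClass x }

/-- The height `H(𝒯)` of (the class of) a tree. -/
def heightT (T : TT) : ℝ := T.1.out.height

/-! ### Subtrees above a level -/

def levelGT (X : PCMS) (t : ℝ) : Set X.carrier := { σ | t < dist X.root σ }

/-- The connected components of the part of `X` strictly above level `t`. -/
def comps (X : PCMS) (t : ℝ) : Set (Set X.carrier) :=
  { C | ∃ σ ∈ levelGT X t, C = connectedComponentIn (levelGT X t) σ }

/-- The common ancestor at level `t` of a component `C`: the point of the closure of `C`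
at distance `t` from the root. -/
def anchor (X : PCMS) (t : ℝ) (C : Set X.carrier) : X.carrier :=
  Classical.epsilon fun a => a ∈ closure C ∧ dist X.root a = t

/-- The subtree corresponding to a connected component `C` above level `t`, rooted at the
common ancestor of `C` at level `t`. -/
def subPCMS (X : PCMS) (t : ℝ) (C : Set X.carrier) : PCMS where
  carrier := ↥(closure C ∪ {anchor X t C})
  met := inferInstance
  cpt := isCompact_iff_compactSpace.mp
    ((isClosed_closure.union isClosed_singleton).isCompact)
  root := ⟨anchor X t C, Set.mem_union_right _ rfl⟩

/-- The components above level `t` whose subtree has height `> h`. -/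
def bigComps (X : PCMS) (t h : ℝ) : Set (Set X.carrier) :=
  { C | C ∈ comps X t ∧ h < (subPCMS X t C).height }

/-- `Z(t,t+h)`: the number of subtrees above level `t` with height `> h`
(with the convention `Z(0,h) = 𝟙{H > h}`). -/
def Zp (X : PCMS) (t h : ℝ) : ℕ :=
  if t = 0 then (if h < X.height then 1 else 0) else (bigComps X t h).ncard

def ZT (T : TT) (t h : ℝ) : ℕ := Zp T.1.out t h

/-- An arbitrary enumeration of a collection of `p` subsets. -/
def enumSet (X : PCMS) (S : Set (Set X.carrier)) (p : ℕ) : Fin p → Set X.carrier :=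
  fun i => if hn : Nonempty (Fin p ≃ ↥S) then ((Classical.choice hn) i : Set X.carrier) else ∅

/-- An enumeration of (the classes of) the subtrees of `X` above level `t` with
height `> h`. -/
def subtreesVec (X : PCMS) (t h : ℝ) (p : ℕ) : Fin p → MT :=
  fun i => (subPCMS X t (enumSet X (bigComps X t h) p i)).toMT

def subtreesVecT (T : TT) (t h : ℝ) (p : ℕ) : Fin p → MT := subtreesVec T.1.out t h p

/-- An enumeration of (the classes of) all the subtrees of `T` above level `t`. -/
def allSubtreesVecT (T : TT) (t : ℝ) (p : ℕ) : Fin p → MT :=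
  fun i => (subPCMS T.1.out t (enumSet T.1.out (comps T.1.out t) p i)).toMT

/-! ### Conditioned measures and the regenerative property -/

/-- The conditioned measure `μ(· | s)`. -/
def condOn {α : Type*} [MeasurableSpace α] (μ : Measure α) (s : Set α) : Measure α :=
  (μ s)⁻¹ • μ.restrict s

/-- The law of `p` i.i.d. samples from `μ`. -/
def iidMeasure {α : Type*} [MeasurableSpace α] (p : ℕ) (μ : Measure α) :
    Measure (Fin p → α) :=
  Measure.pi fun _ => μ

/-- The regenerative property (R): for every `t,h>0` and `p`, under `Θ(· | H > t)` and
conditionally on `{Z(t,t+h) = p}`, the unordered collection of the `p` subtrees above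
level `t` with height `> h` is distributed as `p` i.i.d. samples of `Θ(· | H > h)`;
expressed by testing against all symmetric measurable functionals. -/
def Regenerative (Θ : Measure TT) : Prop :=
  ∀ t h : ℝ, 0 < t → 0 < h → ∀ p : ℕ,
    ∀ F : (Fin p → MT) → ℝ≥0∞, Measurable F →
      (∀ (v : Fin p → MT) (π : Equiv.Perm (Fin p)), F (v ∘ π) = F v) →
      ∫⁻ T in { T : TT | ZT T t h = p }, F (subtreesVecT T t h p)
          ∂(condOn Θ { T | t < heightT T }) =
        condOn Θ { T | t < heightT T } { T : TT | ZT T t h = p } *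
          ∫⁻ v, F v ∂(iidMeasure p ((condOn Θ { T | h < heightT T }).map Subtype.val))

/-- `v(t) = Θ(H(𝒯) > t)`, as a real number. -/
def vOf (Θ : Measure TT) (t : ℝ) : ℝ := (Θ { T | t < heightT T }).toReal

/-! ### Rooted ordered trees and their unordered classes -/

/-- A rooted ordered tree: a finite set of words on `ℕ` containing the empty word,
stable under taking the parent, and in which the children of a vertex `u` are
`u1, …, uk_u` for some `k_u ≥ 0`. -/
def IsOTree (s : Finset (List ℕ)) : Prop :=
  [] ∈ s ∧ (∀ u ∈ s, u ≠ [] → u.dropLast ∈ s) ∧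
    ∀ u ∈ s, ∃ k : ℕ, ∀ j : ℕ, u ++ [j] ∈ s ↔ 1 ≤ j ∧ j ≤ k

/-- The set `𝒜` of rooted ordered trees. -/
abbrev ATree := { s : Finset (List ℕ) // IsOTree s }

instance : MeasurableSpace ATree := ⊤

lemma isOTree_root : IsOTree {([] : List ℕ)} := by
  refine ⟨Finset.mem_singleton_self _, fun u hu hne => ?_, fun u hu => ⟨0, fun j => ?_⟩⟩
  · rw [Finset.mem_singleton] at hu; exact absurd hu hne
  · rw [Finset.mem_singleton] at hu; subst hu
    simp only [List.nil_append, Finset.mem_singleton]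
    constructor
    · intro h; exact absurd h (by simp)
    · rintro ⟨h1, h2⟩; omega

/-- The trivial tree `{∅}`. -/
def rootA : ATree := ⟨{[]}, isOTree_root⟩

/-- `k_u(θ)`: the number of children of the vertex `u` in `θ`. -/
def kA (θ : ATree) (u : List ℕ) : ℕ :=
  (θ.1.filter fun v => v ≠ [] ∧ v.dropLast = u).card

/-- The height `H(θ) = max{|u| : u ∈ θ}` of an ordered tree (`|∅| = 0`). -/
def htA (θ : ATree) : ℕ := θ.1.sup List.length

def shiftSet (s : Finset (List ℕ)) (u : List ℕ) : Finset (List ℕ) :=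
  (s.filter fun w => u <+: w).image fun w => w.drop u.length

/-- The shifted tree `τ_u θ = {v : uv ∈ θ}`. -/
def shiftA (θ : ATree) (u : List ℕ) : ATree :=
  if h : IsOTree (shiftSet θ.1 u) then ⟨_, h⟩ else rootA

/-- Relabelling of words: the `i`-th letter of a word is relabelled by a permutation
depending on the prefix of length `i-1`. -/
def relabelAux (Φ : List ℕ → ℕ → ℕ) : List ℕ → List ℕ → List ℕ
  | _, [] => []
  | pre, j :: rest => Φ pre j :: relabelAux Φ (pre ++ [j]) rest

/-- Equivalence of ordered trees: `θ'` is obtained from `θ` by permuting, at every vertex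
`u` of `θ`, the order of the `k_u(θ)` children. -/
def AEquiv (θ θ' : ATree) : Prop :=
  ∃ Φ : List ℕ → ℕ → ℕ,
    (∀ u ∈ θ.1, Set.BijOn (Φ u) (Set.Icc 1 (kA θ u)) (Set.Icc 1 (kA θ u))) ∧
    θ'.1 = θ.1.image (relabelAux Φ [])

/-- The set `𝔸 = 𝒜/∼` of unordered trees. -/
abbrev AQ := Quot AEquiv

/-- The canonical projection `𝔭 : 𝒜 → 𝔸`. -/
def projA (θ : ATree) : AQ := Quot.mk _ θ

/-- The fiber `𝔭⁻¹(ξ)`. -/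
def fiber (ξ : AQ) : Set ATree := { θ | projA θ = ξ }

/-! ### Galton–Watson trees -/

/-- `Π` is the law of the Galton–Watson tree with offspring distribution `γ`:
the number of children of the root has law `γ`, and conditionally on the root having
`p` children, the `p` shifted trees are i.i.d. with law `Π`. -/
def IsGW (γ : ℕ → ℝ≥0∞) (Q : MeasureTheory.Measure ATree) : Prop :=
  MeasureTheory.IsProbabilityMeasure Q ∧
  (∀ p : ℕ, Q { θ | kA θ [] = p } = γ p) ∧
  ∀ p : ℕ, 0 < γ p → ∀ F : (Fin p → ATree) → ℝ≥0∞, Measurable F →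
    ∫⁻ θ in { θ | kA θ [] = p }, F (fun i => shiftA θ [i.1 + 1]) ∂Q =
      γ p * ∫⁻ g, F g ∂(iidMeasure p Q)

/-- `m`-fold convolution power of a distribution on `ℕ`: the law of the sum of `m`
i.i.d. samples of `μ`. -/
def convPow (μ : ℕ → ℝ≥0∞) : ℕ → ℕ → ℝ≥0∞
  | 0, n => if n = 0 then 1 else 0
  | m + 1, n => ∑ k ∈ Finset.range (n + 1), convPow μ m k * μ (n - k)
/-! ### The real tree coded by a (marked) discrete tree -/

/-- The ambient space `ℓ¹(U)` in which the trees `𝒯^T` are constructed; on the subset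
`𝒯^T`, which is a union of segments each parallel to a coordinate axis, the induced
`ℓ¹` distance coincides with the shortest-path distance. -/
abbrev lpTreeSpace := ↥(lp (fun _ : List ℕ => ℝ) 1)

/-- The canonical basis vector `e_u`. -/
def sgl (u : List ℕ) : lpTreeSpace := lp.single 1 u (1 : ℝ)

/-- The proper prefixes of a word (including the empty word). -/
def properPref (u : List ℕ) : Finset (List ℕ) := u.inits.toFinset.erase u

/-- The point `l_u + s e_u` of the tree coded by the marked tree with edge lengths
`h`, lying on the edge below the vertex `u`, where `l_u = ∑ h_w e_w` over the proper
prefixes `w` of `u`. -/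
def ptv (h : List ℕ → ℝ) (u : List ℕ) (s : ℝ) : lpTreeSpace :=
  (∑ w ∈ properPref u, h w • sgl w) + s • sgl u

/-- The subset `𝒯^T = ⋃_{u ∈ θ} [l_u, l_u + h_u e_u]` of `ℓ¹(U)`. -/
def treeSet (θ : ATree) (h : List ℕ → ℝ) : Set lpTreeSpace :=
  insert 0 (⋃ u ∈ (θ.1 : Set (List ℕ)), (fun s => ptv h u s) '' Set.Icc 0 (h u))

/-- The rooted compact real tree `𝒯^T` coded by the marked tree `T = (θ, {h_u}_{u∈θ})`,
equipped with the shortest-path (i.e. induced `ℓ¹`) metric and rooted at `0`. -/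
def markedPCMS (θ : ATree) (h : List ℕ → ℝ) : PCMS where
  carrier := ↥(treeSet θ h)
  met := inferInstance
  cpt := by
    refine isCompact_iff_compactSpace.mp (IsCompact.insert ?_ 0)
    refine Set.Finite.isCompact_biUnion (θ.1.finite_toSet) fun u _ => ?_
    exact isCompact_Icc.image
      (continuous_const.add ((continuous_id.smul continuous_const)))
  root := ⟨0, Set.mem_insert _ _⟩

/-- The tree `ε·𝒯^θ`: the tree coded by `θ` where every edge is given length `ε`
(the root edge `h_∅ = 0`). -/
def treeOf (ε : ℝ) (θ : ATree) : PCMS :=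
  markedPCMS θ fun u => if u = [] then 0 else ε

/-! ### Discretization `ξ^ε` of a real tree -/

/-- Grafting `k` discrete trees on a common root. -/
def graft (k : ℕ) (f : Fin k → Finset (List ℕ)) : Finset (List ℕ) :=
  {[]} ∪ Finset.univ.biUnion fun i : Fin k => (f i).image fun u => (i.1 + 1) :: u

/-- The inductive construction of `ξ^ε(𝒯)` (with fuel `n`): if `H(𝒯) ≤ 2ε` the tree is
`{∅}`; otherwise graft the discretizations of the subtrees of `𝒯` above level `ε`
with height `> ε`. -/
def discApprox (ε : ℝ) : ℕ → PCMS → Finset (List ℕ)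
  | 0, _ => {[]}
  | n + 1, X =>
    if X.height ≤ 2 * ε then {[]}
    else graft (Zp X ε ε) fun i =>
      discApprox ε n (subPCMS X ε (enumSet X (bigComps X ε ε) (Zp X ε ε) i))

/-- An ordered representative of `ξ^ε(𝒯)`. -/
def xiEpsA (ε : ℝ) (X : PCMS) : ATree :=
  if h : IsOTree (discApprox ε (Nat.ceil (X.height / ε)) X) then ⟨_, h⟩ else rootA

/-- The unordered tree `ξ^ε(𝒯) ∈ 𝔸`. -/
def xiEpsQ (ε : ℝ) (X : PCMS) : AQ := projA (xiEpsA ε X)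
/-! ### Poisson point measures and the local time processes -/

/-- `N` is (a version of) a Poisson point measure `𝒩 = Σ_{i∈I} δ_{𝒯_i}` on `𝕋` with
intensity `Θ`, under the probability measure `P`: each `N ω` is a countable sum of
Dirac masses, `ω ↦ N ω s` is measurable, `N · s` is Poisson with parameter `Θ s` for
`s` of finite intensity, and the counts of disjoint sets are independent. -/
def IsPoissonPM {Ω : Type*} [MeasurableSpace Ω] (P : MeasureTheory.Measure Ω)
    (N : Ω → MeasureTheory.Measure TT) (Θ : MeasureTheory.Measure TT) : Prop :=
  (∀ ω, ∃ (ι : Type) (_ : Countable ι) (f : ι → TT),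
      N ω = MeasureTheory.Measure.sum fun i => MeasureTheory.Measure.dirac (f i)) ∧
  (∀ s : Set TT, MeasurableSet s → Measurable fun ω => N ω s) ∧
  (∀ s : Set TT, MeasurableSet s → Θ s < ∞ → ∀ n : ℕ,
      P { ω | N ω s = n } =
        ENNReal.ofReal (Real.exp (-(Θ s).toReal) * (Θ s).toReal ^ n / n.factorial)) ∧
  (∀ (k : ℕ) (s : Fin k → Set TT), (∀ i, MeasurableSet (s i)) →
      (Pairwise fun i j => Disjoint (s i) (s j)) →
      ProbabilityTheory.iIndepFun (fun i ω => N ω (s i)) P)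

/-- `𝒵(t,t+h) = Σ_{i∈I} Z(t,t+h)(𝒯_i)`, as an extended nonnegative real. -/
def pZ {Ω : Type*} (N : Ω → MeasureTheory.Measure TT) (t h : ℝ) (ω : Ω) : ℝ≥0∞ :=
  ∫⁻ T, (ZT T t h : ℝ≥0∞) ∂(N ω)

/-- `𝒵(t,t+h)` as a real random variable. -/
def calZ {Ω : Type*} (N : Ω → MeasureTheory.Measure TT) (t h : ℝ) (ω : Ω) : ℝ :=
  (pZ N t h ω).toReal

/-- The local time `ℒ_t = Σ_{i∈I} L_t(𝒯_i)` (with `ℒ_0 = 1`). -/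
def calL {Ω : Type*} (N : Ω → MeasureTheory.Measure TT) (L : ℝ → TT → ℝ) (t : ℝ)
    (ω : Ω) : ℝ :=
  if t = 0 then 1 else (∫⁻ T, ENNReal.ofReal (L t T) ∂(N ω)).toReal

/-- The rescaled Galton-Watson processes `Y^n_t = n⁻¹ 𝒳^{η_n}_{[m_n t]}`, where
`m_n = [η_n⁻¹]` and `𝒳^ε_k = 𝒵(kε,(k+1)ε)`. -/
def Yproc {Ω : Type*} (N : Ω → MeasureTheory.Measure TT) (η : ℕ → ℝ) (n : ℕ) (t : ℝ)
    (ω : Ω) : ℝ :=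
  calZ N ((Nat.floor (((Nat.floor ((η n)⁻¹) : ℕ) : ℝ) * t) : ℕ) * η n) (η n) ω / n

/-- The set of positive dyadic numbers. -/
def Ddy : Set ℝ := { x | ∃ k n : ℕ, 1 ≤ k ∧ x = (k : ℝ) / 2 ^ n }

/-- The dyadic filtration `𝒢_t = σ(ℒ_s, s ∈ D, s ≤ t)`. -/
def GfilD {Ω : Type*} [MeasurableSpace Ω] (N : Ω → MeasureTheory.Measure TT)
    (L : ℝ → TT → ℝ) (t : ℝ) : MeasurableSpace Ω :=
  ⨆ (s : ℝ) (_ : s ∈ Ddy) (_ : s ≤ t),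
    MeasurableSpace.comap (calL N L s) (inferInstance : MeasurableSpace ℝ)

/-- The exponential distribution with parameter `a`. -/
def expMeasure (a : ℝ) : MeasureTheory.Measure ℝ :=
  MeasureTheory.volume.withDensity fun x =>
    ENNReal.ofReal (if 0 ≤ x then a * Real.exp (-(a * x)) else 0)

/-! ### Truncation, number of individuals at a level, and the filtration `ℱ_t` -/

/-- The truncated tree `𝒯_{≤t} = {σ ∈ 𝒯 : d(ρ,σ) ≤ t}`. -/
def truncPCMS (X : PCMS) (t : ℝ) : PCMS where
  carrier := ↥({ σ : X.carrier | dist X.root σ ≤ t } ∪ {X.root})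
  met := inferInstance
  cpt := isCompact_iff_compactSpace.mp
    (((isClosed_le (continuous_const.dist continuous_id) continuous_const).union
      isClosed_singleton).isCompact)
  root := ⟨X.root, Set.mem_union_right _ rfl⟩

/-- The σ-field on `𝕋` generated by `𝒯 ↦ 𝒯_{≤t}`, completed with respect to `Θ`. -/
def Ffil (Θ : MeasureTheory.Measure TT) (t : ℝ) : MeasurableSpace TT :=
  MeasurableSpace.comap (fun T : TT => (truncPCMS T.1.out t).toMT)
      (inferInstance : MeasurableSpace MT) ⊔
    MeasurableSpace.generateFrom
      { s : Set TT | ∃ n : Set TT, MeasurableSet n ∧ Θ n = 0 ∧ s ⊆ n }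

/-- `N_t(𝒯) = #{σ ∈ 𝒯 : d(ρ,σ) = t}`, the number of individuals of `𝒯` at level `t`. -/
def Ncount (T : TT) (t : ℝ) : ℕ :=
  { σ : T.1.out.carrier | dist T.1.out.root σ = t }.ncard
@[simp] lemma relabelAux_nil (Φ : List ℕ → ℕ → ℕ) (pre : List ℕ) : relabelAux Φ pre [] = [] := rfl
@[simp] lemma relabelAux_cons (Φ : List ℕ → ℕ → ℕ) (pre : List ℕ) (j : ℕ) (rest : List ℕ) :
    relabelAux Φ pre (j :: rest) = Φ pre j :: relabelAux Φ (pre ++ [j]) rest := rfl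

lemma prefix_mem (θ : ATree) {u v : List ℕ} (hu : u ∈ θ.1) (hv : v <+: u) : v ∈ θ.1 := by
  induction u using List.reverseRecOn generalizing v with
  | nil => rw [List.prefix_nil.mp hv]; exact hu
  | append_singleton l a ih =>
    rcases List.prefix_concat_iff.mp hv with h | h
    · rw [h]; exact hu
    · have hl : l ∈ θ.1 := by
        have := θ.2.2.1 _ hu (by simp)
        simpa [List.dropLast_concat] using this
      exact ih hl h

lemma kA_congr {θ₁ θ₂ : ATree} (h : θ₁.1 = θ₂.1) (u : List ℕ) : kA θ₁ u = kA θ₂ u := by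
  rw [kA, kA, h]

lemma kA_eq_zero_of_not_mem (θ : ATree) {u : List ℕ} (hu : u ∉ θ.1) : kA θ u = 0 := by
  rw [kA, Finset.card_eq_zero, Finset.filter_eq_empty_iff]
  rintro v hv ⟨hne, hdl⟩
  exact hu (hdl ▸ θ.2.2.1 v hv hne)

lemma kA_eq (θ : ATree) {u : List ℕ} {m : ℕ} (h : ∀ j : ℕ, u ++ [j] ∈ θ.1 ↔ 1 ≤ j ∧ j ≤ m) :
    kA θ u = m := by
  have key : θ.1.filter (fun v => v ≠ [] ∧ v.dropLast = u) =
      (Finset.Icc 1 m).image (fun j => u ++ [j]) := by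
    ext v
    simp only [Finset.mem_filter, Finset.mem_image, Finset.mem_Icc]
    constructor
    · rintro ⟨hv, hne, hdl⟩
      have hveq : u ++ [v.getLast hne] = v := by
        rw [← hdl]; exact List.dropLast_append_getLast hne
      exact ⟨v.getLast hne, (h _).mp (by rw [hveq]; exact hv), hveq⟩
    · rintro ⟨j, hj, rfl⟩
      exact ⟨(h j).mpr hj, by simp, List.dropLast_concat⟩
  rw [kA, key, Finset.card_image_of_injective _ (fun a b hab => by simpa using hab),
    Nat.card_Icc]
  omega

lemma mem_children_iff (θ : ATree) {u : List ℕ} (hu : u ∈ θ.1) (j : ℕ) :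
    u ++ [j] ∈ θ.1 ↔ 1 ≤ j ∧ j ≤ kA θ u := by
  obtain ⟨m, hm⟩ := θ.2.2.2 u hu
  rw [kA_eq θ hm]; exact hm j

lemma mem_shiftSet (s : Finset (List ℕ)) (u v : List ℕ) : v ∈ shiftSet s u ↔ u ++ v ∈ s := by
  simp only [shiftSet, Finset.mem_image, Finset.mem_filter]
  constructor
  · rintro ⟨w, ⟨hw, hpre⟩, rfl⟩
    obtain ⟨t, rfl⟩ := hpre
    simpa using hw
  · intro h
    exact ⟨u ++ v, ⟨h, ⟨v, rfl⟩⟩, by simp⟩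

lemma isOTree_shiftSet (θ : ATree) {u : List ℕ} (hu : u ∈ θ.1) : IsOTree (shiftSet θ.1 u) := by
  refine ⟨?_, ?_, ?_⟩
  · rw [mem_shiftSet]; simpa using hu
  · intro v hv hne
    rw [mem_shiftSet] at hv ⊢
    have h1 : (u ++ v).dropLast ∈ θ.1 := θ.2.2.1 _ hv (by simp [hne])
    rwa [List.dropLast_append_of_ne_nil hne] at h1
  · intro v hv
    rw [mem_shiftSet] at hv
    obtain ⟨m, hm⟩ := θ.2.2.2 _ hv
    exact ⟨m, fun j => by rw [mem_shiftSet, ← List.append_assoc]; exact hm j⟩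

lemma shiftA_val (θ : ATree) {u : List ℕ} (hu : u ∈ θ.1) : (shiftA θ u).1 = shiftSet θ.1 u := by
  rw [shiftA, dif_pos (isOTree_shiftSet θ hu)]

lemma mem_shiftA (θ : ATree) {u : List ℕ} (hu : u ∈ θ.1) (v : List ℕ) :
    v ∈ (shiftA θ u).1 ↔ u ++ v ∈ θ.1 := by rw [shiftA_val θ hu, mem_shiftSet]

lemma kA_shiftA (θ : ATree) {u : List ℕ} (hu : u ∈ θ.1) (w : List ℕ) :
    kA (shiftA θ u) w = kA θ (u ++ w) := by
  by_cases hw : u ++ w ∈ θ.1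
  · refine kA_eq _ (fun j => ?_)
    rw [mem_shiftA θ hu, ← List.append_assoc, mem_children_iff θ hw]
  · rw [kA_eq_zero_of_not_mem θ hw]
    refine kA_eq _ (fun j => ?_)
    rw [mem_shiftA θ hu, ← List.append_assoc]
    constructor
    · intro h; exact absurd (prefix_mem θ h ⟨[j], rfl⟩) hw
    · omega

lemma relabelAux_length (Φ : List ℕ → ℕ → ℕ) (u : List ℕ) : ∀ pre,
    (relabelAux Φ pre u).length = u.length := by
  induction u with
  | nil => intro pre; rfl
  | cons j rest ih => intro pre; simp [ih]

lemma relabelAux_append (Φ : List ℕ → ℕ → ℕ) (u v : List ℕ) : ∀ pre,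
    relabelAux Φ pre (u ++ v) = relabelAux Φ pre u ++ relabelAux Φ (pre ++ u) v := by
  induction u with
  | nil => intro pre; simp
  | cons j rest ih =>
    intro pre
    simp [ih, List.append_assoc]

lemma relabelAux_shift (u : List ℕ) : ∀ (Φ : List ℕ → ℕ → ℕ) (pre : List ℕ),
    relabelAux Φ pre u = relabelAux (fun w => Φ (pre ++ w)) [] u := by
  induction u with
  | nil => intros; rfl
  | cons j rest ih =>
    intro Φ pre
    show Φ pre j :: relabelAux Φ (pre ++ [j]) rest
      = Φ (pre ++ []) j :: relabelAux (fun w => Φ (pre ++ w)) ([] ++ [j]) rest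
    rw [ih Φ (pre ++ [j]), ih (fun w => Φ (pre ++ w)) ([] ++ [j])]
    simp [List.append_assoc]

lemma relabelAux_congr (θ : ATree) (Φ Φ' : List ℕ → ℕ → ℕ)
    (h : ∀ w j, w ∈ θ.1 → w ++ [j] ∈ θ.1 → Φ w j = Φ' w j) :
    ∀ (u pre : List ℕ), pre ∈ θ.1 → pre ++ u ∈ θ.1 →
      relabelAux Φ pre u = relabelAux Φ' pre u := by
  intro u
  induction u with
  | nil => intros; rfl
  | cons j rest ih =>
    intro pre hpre hmem
    have h1 : pre ++ [j] ∈ θ.1 := prefix_mem θ hmem ⟨rest, by simp⟩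
    have h2 : (pre ++ [j]) ++ rest ∈ θ.1 := by simpa [List.append_assoc] using hmem
    simp only [relabelAux_cons]
    rw [h pre j hpre h1, ih (pre ++ [j]) h1 h2]

lemma relabelAux_id (u : List ℕ) : ∀ pre, relabelAux (fun _ j => j) pre u = u := by
  induction u with
  | nil => intros; rfl
  | cons j rest ih => intro pre; simp [ih]

lemma relabelAux_eq_self (θ : ATree) (Φ : List ℕ → ℕ → ℕ)
    (h : ∀ w j, w ∈ θ.1 → w ++ [j] ∈ θ.1 → Φ w j = j) {u : List ℕ} (hu : u ∈ θ.1) :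
    relabelAux Φ [] u = u := by
  rw [relabelAux_congr θ Φ (fun _ j => j) h u [] θ.2.1 (by simpa using hu), relabelAux_id]

lemma relabelAux_comp (Φ₁ Φ₂ : List ℕ → ℕ → ℕ) (u : List ℕ) : ∀ pre,
    relabelAux Φ₂ (relabelAux Φ₁ [] pre) (relabelAux Φ₁ pre u) =
    relabelAux (fun v j => Φ₂ (relabelAux Φ₁ [] v) (Φ₁ v j)) pre u := by
  induction u with
  | nil => intros; rfl
  | cons j rest ih =>
    intro pre
    simp only [relabelAux_cons]
    refine congrArg₂ List.cons rfl ?_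
    have key : relabelAux Φ₁ [] pre ++ [Φ₁ pre j] = relabelAux Φ₁ [] (pre ++ [j]) := by
      rw [relabelAux_append]; simp
    rw [key, ih (pre ++ [j])]

lemma relabel_injOn (θ : ATree) (Φ : List ℕ → ℕ → ℕ)
    (hΦ : ∀ w ∈ θ.1, Set.InjOn (Φ w) (Set.Icc 1 (kA θ w))) :
    ∀ (u pre v : List ℕ), pre ++ u ∈ θ.1 → pre ++ v ∈ θ.1 →
      relabelAux Φ pre u = relabelAux Φ pre v → u = v := by
  intro u
  induction u with
  | nil =>
    intro pre v _ _ h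
    have hl : v.length = 0 := by
      have h2 := relabelAux_length Φ v pre
      rw [← h] at h2; simpa using h2.symm
    exact (List.length_eq_zero_iff.mp hl).symm
  | cons j rest ih =>
    intro pre v hu hv h
    cases v with
    | nil =>
      exact absurd (congrArg List.length h) (by simp [relabelAux_length])
    | cons b v' =>
      have hpre : pre ∈ θ.1 := prefix_mem θ hu (List.prefix_append _ _)
      have hj1 : pre ++ [j] ∈ θ.1 := prefix_mem θ hu ⟨rest, by simp⟩
      have hb1 : pre ++ [b] ∈ θ.1 := prefix_mem θ hv ⟨v', by simp⟩
      have hj : j ∈ Set.Icc 1 (kA θ pre) := by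
        simpa [Set.mem_Icc] using (mem_children_iff θ hpre j).mp hj1
      have hb : b ∈ Set.Icc 1 (kA θ pre) := by
        simpa [Set.mem_Icc] using (mem_children_iff θ hpre b).mp hb1
      simp only [relabelAux_cons, List.cons.injEq] at h
      have hjb : j = b := hΦ pre hpre hj hb h.1
      subst hjb
      have := ih (pre ++ [j]) v' (by simpa [List.append_assoc] using hu)
        (by simpa [List.append_assoc] using hv) h.2
      rw [this]

lemma image_children (θ : ATree) (Φ : List ℕ → ℕ → ℕ)
    (hΦ : ∀ u ∈ θ.1, Set.BijOn (Φ u) (Set.Icc 1 (kA θ u)) (Set.Icc 1 (kA θ u)))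
    {u : List ℕ} (hu : u ∈ θ.1) (j : ℕ) :
    relabelAux Φ [] u ++ [j] ∈ θ.1.image (relabelAux Φ []) ↔ 1 ≤ j ∧ j ≤ kA θ u := by
  constructor
  · intro hmem
    obtain ⟨w, hw, hrel⟩ := Finset.mem_image.mp hmem
    rcases List.eq_nil_or_concat w with rfl | ⟨w', a, rfl⟩
    · exact absurd (congrArg List.length hrel) (by simp [relabelAux_length])
    · rw [List.concat_eq_append] at hw hrel
      rw [relabelAux_append] at hrel
      have hw' : w' ∈ θ.1 := prefix_mem θ hw (List.prefix_append _ _)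
      have hform : relabelAux Φ ([] ++ w') [a] = [Φ w' a] := by simp
      rw [hform] at hrel
      have h1 : relabelAux Φ [] w' = relabelAux Φ [] u := by
        have := congrArg List.dropLast hrel; simpa [List.dropLast_concat] using this
      have h2 : Φ w' a = j := by
        rw [h1] at hrel
        have := List.append_cancel_left hrel
        simpa using this
      have hweq : w' = u := relabel_injOn θ Φ (fun w hw => (hΦ w hw).injOn) w' [] u
        (by simpa using hw') (by simpa using hu) h1
      subst hweq
      have ha : a ∈ Set.Icc 1 (kA θ w') := by
        simpa [Set.mem_Icc] using (mem_children_iff θ hw' a).mp hw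
      have := (hΦ w' hw').mapsTo ha
      rw [h2] at this; simpa [Set.mem_Icc] using this
  · rintro ⟨hj1, hj2⟩
    obtain ⟨a, ha, haj⟩ := (hΦ u hu).surjOn (show j ∈ Set.Icc 1 (kA θ u) by
      simp [Set.mem_Icc]; omega)
    refine Finset.mem_image.mpr ⟨u ++ [a],
      (mem_children_iff θ hu a).mpr (by simpa [Set.mem_Icc] using ha), ?_⟩
    rw [relabelAux_append]
    simp [haj]

lemma image_isOTree (θ : ATree) (Φ : List ℕ → ℕ → ℕ)
    (hΦ : ∀ u ∈ θ.1, Set.BijOn (Φ u) (Set.Icc 1 (kA θ u)) (Set.Icc 1 (kA θ u))) :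
    IsOTree (θ.1.image (relabelAux Φ [])) := by
  refine ⟨Finset.mem_image.mpr ⟨[], θ.2.1, rfl⟩, ?_, ?_⟩
  · intro v hv hne
    obtain ⟨u, hu, rfl⟩ := Finset.mem_image.mp hv
    rcases List.eq_nil_or_concat u with rfl | ⟨u', a, rfl⟩
    · simp at hne
    · rw [List.concat_eq_append] at hu ⊢
      rw [relabelAux_append]
      have hform : relabelAux Φ ([] ++ u') [a] = [Φ u' a] := by simp
      rw [hform, List.dropLast_concat]
      exact Finset.mem_image.mpr ⟨u', prefix_mem θ hu (List.prefix_append _ _), rfl⟩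
  · intro v hv
    obtain ⟨u, hu, rfl⟩ := Finset.mem_image.mp hv
    exact ⟨kA θ u, fun j => image_children θ Φ hΦ hu j⟩

lemma kA_image (θ : ATree) (Φ : List ℕ → ℕ → ℕ)
    (hΦ : ∀ u ∈ θ.1, Set.BijOn (Φ u) (Set.Icc 1 (kA θ u)) (Set.Icc 1 (kA θ u)))
    {u : List ℕ} (hu : u ∈ θ.1) :
    kA ⟨θ.1.image (relabelAux Φ []), image_isOTree θ Φ hΦ⟩ (relabelAux Φ [] u) = kA θ u :=
  kA_eq _ (image_children θ Φ hΦ hu)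

lemma aequiv_refl (θ : ATree) : AEquiv θ θ := by
  refine ⟨fun _ j => j, fun u hu => Set.bijOn_id _, ?_⟩
  have : (relabelAux (fun _ j => j) ([] : List ℕ)) = id := funext (fun u => relabelAux_id u [])
  rw [this, Finset.image_id]

lemma aequiv_symm {θ θ' : ATree} (h : AEquiv θ θ') : AEquiv θ' θ := by
  obtain ⟨Φ, hΦ, him⟩ := h
  classical
  set Ψ : List ℕ → ℕ → ℕ := fun v =>
    if h : ∃ u, u ∈ θ.1 ∧ relabelAux Φ [] u = v then
      Function.invFunOn (Φ h.choose) (Set.Icc 1 (kA θ h.choose)) else id with hΨdef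
  have hΨ : ∀ u ∈ θ.1, Ψ (relabelAux Φ [] u) =
      Function.invFunOn (Φ u) (Set.Icc 1 (kA θ u)) := by
    intro u hu
    have hex : ∃ w, w ∈ θ.1 ∧ relabelAux Φ [] w = relabelAux Φ [] u := ⟨u, hu, rfl⟩
    have hch := hex.choose_spec
    have hc : hex.choose = u := relabel_injOn θ Φ (fun w hw => (hΦ w hw).injOn) _ [] _
      (by simpa using hch.1) (by simpa using hu) hch.2
    rw [hΨdef]
    simp only [dif_pos hex, hc]
  have hinvapp : ∀ u ∈ θ.1, relabelAux Ψ [] (relabelAux Φ [] u) = u := by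
    intro u hu
    have hcomp := relabelAux_comp Φ Ψ u []
    simp only [relabelAux_nil] at hcomp
    rw [hcomp]
    refine relabelAux_eq_self θ _ ?_ hu
    intro w j hw hwj
    show Ψ (relabelAux Φ [] w) (Φ w j) = j
    rw [hΨ w hw]
    have hj : j ∈ Set.Icc 1 (kA θ w) := by
      simpa [Set.mem_Icc] using (mem_children_iff θ hw j).mp hwj
    exact ((hΦ w hw).invOn_invFunOn).1 hj
  refine ⟨Ψ, ?_, ?_⟩
  · intro v hv
    rw [him] at hv
    obtain ⟨u, hu, rfl⟩ := Finset.mem_image.mp hv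
    have hk : kA θ' (relabelAux Φ [] u) = kA θ u := by
      rw [kA_congr (θ₂ := ⟨θ.1.image (relabelAux Φ []), image_isOTree θ Φ hΦ⟩)
        him (relabelAux Φ [] u)]
      exact kA_image θ Φ hΦ hu
    rw [hk, hΨ u hu]
    exact Set.InvOn.bijOn ((hΦ u hu).invOn_invFunOn.symm)
      ((hΦ u hu).surjOn.mapsTo_invFunOn) (hΦ u hu).mapsTo
  · rw [him, Finset.image_image]
    ext v
    simp only [Finset.mem_image, Function.comp]
    constructor
    · intro hv
      exact ⟨v, hv, hinvapp v hv⟩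
    · rintro ⟨u, hu, rfl⟩
      rw [hinvapp u hu]; exact hu

lemma aequiv_trans {θ₁ θ₂ θ₃ : ATree} (h12 : AEquiv θ₁ θ₂) (h23 : AEquiv θ₂ θ₃) :
    AEquiv θ₁ θ₃ := by
  obtain ⟨Φ₁, hΦ₁, him₁⟩ := h12
  obtain ⟨Φ₂, hΦ₂, him₂⟩ := h23
  refine ⟨fun v j => Φ₂ (relabelAux Φ₁ [] v) (Φ₁ v j), ?_, ?_⟩
  · intro u hu
    have hmem : relabelAux Φ₁ [] u ∈ θ₂.1 := by
      rw [him₁]; exact Finset.mem_image.mpr ⟨u, hu, rfl⟩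
    have hk : kA θ₂ (relabelAux Φ₁ [] u) = kA θ₁ u := by
      rw [kA_congr (θ₂ := ⟨θ₁.1.image (relabelAux Φ₁ []), image_isOTree θ₁ Φ₁ hΦ₁⟩)
        him₁ (relabelAux Φ₁ [] u)]
      exact kA_image θ₁ Φ₁ hΦ₁ hu
    have hb2 := hΦ₂ _ hmem
    rw [hk] at hb2
    exact hb2.comp (hΦ₁ u hu)
  · rw [him₂, him₁, Finset.image_image]
    refine Finset.image_congr ?_
    intro u _
    show (relabelAux Φ₂ [] ∘ relabelAux Φ₁ []) u = _
    exact relabelAux_comp Φ₁ Φ₂ u []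

lemma aequiv_equivalence : Equivalence AEquiv :=
  ⟨aequiv_refl, aequiv_symm, aequiv_trans⟩

lemma projA_eq_iff {θ θ' : ATree} : projA θ = projA θ' ↔ AEquiv θ θ' := by
  rw [projA, projA, Quot.eq]
  exact ⟨fun h => (aequiv_equivalence.eqvGen_iff).mp h, Relation.EqvGen.rel _ _⟩

lemma mem_fiber_iff {θ : ATree} {ξ : AQ} : θ ∈ fiber ξ ↔ projA θ = ξ := Iff.rfl

lemma kA_root_eq {θ θ' : ATree} (h : AEquiv θ θ') : kA θ' [] = kA θ [] := by
  obtain ⟨Φ, hΦ, him⟩ := h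
  have h1 := kA_image θ Φ hΦ θ.2.1
  rw [relabelAux_nil] at h1
  rw [kA_congr (θ₂ := ⟨θ.1.image (relabelAux Φ []), image_isOTree θ Φ hΦ⟩) him []]
  exact h1

lemma mem_root_children (θ : ATree) (j : ℕ) : [j] ∈ θ.1 ↔ 1 ≤ j ∧ j ≤ kA θ [] := by
  have := mem_children_iff θ θ.2.1 j
  simpa using this

lemma aequiv_shift (θ θ' : ATree) (Φ : List ℕ → ℕ → ℕ)
    (hΦ : ∀ u ∈ θ.1, Set.BijOn (Φ u) (Set.Icc 1 (kA θ u)) (Set.Icc 1 (kA θ u)))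
    (him : θ'.1 = θ.1.image (relabelAux Φ []))
    {j : ℕ} (hj : [j] ∈ θ.1) :
    AEquiv (shiftA θ [j]) (shiftA θ' [Φ [] j]) := by
  have hjIcc : j ∈ Set.Icc 1 (kA θ []) := by
    simpa [Set.mem_Icc] using (mem_root_children θ j).mp hj
  have hPhij : [Φ [] j] ∈ θ'.1 := by
    rw [him]
    exact Finset.mem_image.mpr ⟨[j], hj, by simp⟩
  refine ⟨fun w => Φ (j :: w), ?_, ?_⟩
  · intro w hw
    have hmem : j :: w ∈ θ.1 := by
      have := (mem_shiftA θ hj w).mp hw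
      simpa using this
    have hk : kA (shiftA θ [j]) w = kA θ (j :: w) := by
      rw [kA_shiftA θ hj w]; simp
    rw [hk]
    exact hΦ (j :: w) hmem
  · ext v
    rw [mem_shiftA θ' hPhij, him]
    simp only [Finset.mem_image]
    constructor
    · rintro ⟨u, hu, hrel⟩
      cases u with
      | nil => exact absurd (congrArg List.length hrel) (by simp)
      | cons b u' =>
        simp only [relabelAux_cons, List.singleton_append, List.cons.injEq] at hrel
        have hb : [b] ∈ θ.1 := prefix_mem θ hu ⟨u', rfl⟩
        have hbIcc : b ∈ Set.Icc 1 (kA θ []) := by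
          simpa [Set.mem_Icc] using (mem_root_children θ b).mp hb
        have hbj : b = j := (hΦ [] θ.2.1).injOn hbIcc hjIcc hrel.1
        subst hbj
        refine ⟨u', ?_, ?_⟩
        · rw [mem_shiftA θ hj]; simpa using hu
        · rw [← hrel.2]
          conv_rhs => rw [relabelAux_shift]
          rfl
    · rintro ⟨u', hu', rfl⟩
      refine ⟨j :: u', by simpa using (mem_shiftA θ hj u').mp hu', ?_⟩
      simp only [relabelAux_cons, List.singleton_append]
      refine congrArg₂ List.cons rfl ?_
      rw [relabelAux_shift]
      rfl

lemma mem_graft_iff (k : ℕ) (f : Fin k → Finset (List ℕ)) (v : List ℕ) :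
    v ∈ graft k f ↔ v = [] ∨ ∃ (i : Fin k) (w : List ℕ), w ∈ f i ∧ v = (i.1 + 1) :: w := by
  simp only [graft, Finset.mem_union, Finset.mem_singleton, Finset.mem_biUnion,
    Finset.mem_univ, true_and, Finset.mem_image]
  constructor
  · rintro (rfl | ⟨i, w, hw, rfl⟩)
    · exact Or.inl rfl
    · exact Or.inr ⟨i, w, hw, rfl⟩
  · rintro (rfl | ⟨i, w, hw, rfl⟩)
    · exact Or.inl rfl
    · exact Or.inr ⟨i, w, hw, rfl⟩

lemma isOTree_graft (k : ℕ) (g : Fin k → ATree) : IsOTree (graft k fun i => (g i).1) := by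
  refine ⟨(mem_graft_iff _ _ _).mpr (Or.inl rfl), ?_, ?_⟩
  · intro v hv hne
    rcases (mem_graft_iff _ _ _).mp hv with rfl | ⟨i, w, hw, rfl⟩
    · exact absurd rfl hne
    · rcases eq_or_ne w [] with rfl | hwne
      · exact (mem_graft_iff _ _ _).mpr (Or.inl (by simp))
      · have : ((i.1 + 1) :: w).dropLast = (i.1 + 1) :: w.dropLast := by
          have : ([i.1 + 1] ++ w).dropLast = [i.1 + 1] ++ w.dropLast := List.dropLast_append_of_ne_nil hwne
          simpa using this
        rw [this]
        exact (mem_graft_iff _ _ _).mpr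
          (Or.inr ⟨i, w.dropLast, (g i).2.2.1 w hw hwne, rfl⟩)
  · intro v hv
    rcases (mem_graft_iff _ _ _).mp hv with rfl | ⟨i, w, hw, rfl⟩
    · refine ⟨k, fun j => ?_⟩
      simp only [List.nil_append]
      rw [mem_graft_iff]
      constructor
      · rintro (h | ⟨i, w, hw, heq⟩)
        · exact absurd h (by simp)
        · rcases List.cons.injEq .. ▸ heq with ⟨h1, h2⟩
          have := i.2; omega
      · rintro ⟨h1, h2⟩
        exact Or.inr ⟨⟨j - 1, by omega⟩, [], (g _).2.1, by simp; omega⟩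
    · obtain ⟨m, hm⟩ := (g i).2.2.2 w hw
      refine ⟨m, fun j => ?_⟩
      rw [show ((i.1 + 1) :: w) ++ [j] = (i.1 + 1) :: (w ++ [j]) from rfl, mem_graft_iff]
      constructor
      · rintro (h | ⟨i', w', hw', heq⟩)
        · exact absurd h (by simp)
        · rcases List.cons.injEq .. ▸ heq with ⟨h1, h2⟩
          have hii : i' = i := Fin.ext (by omega)
          subst hii
          rw [← h2] at hw'
          exact (hm j).mp hw'
      · intro hj
        exact Or.inr ⟨i, w ++ [j], (hm j).mpr hj, rfl⟩

def graftA (k : ℕ) (g : Fin k → ATree) : ATree := ⟨graft k fun i => (g i).1, isOTree_graft k g⟩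

lemma mem_graftA_singleton (k : ℕ) (g : Fin k → ATree) (j : ℕ) :
    [j] ∈ (graftA k g).1 ↔ 1 ≤ j ∧ j ≤ k := by
  rw [show (graftA k g).1 = graft k fun i => (g i).1 from rfl, mem_graft_iff]
  constructor
  · rintro (h | ⟨i, w, hw, heq⟩)
    · exact absurd h (by simp)
    · rcases List.cons.injEq .. ▸ heq with ⟨h1, h2⟩
      have := i.2; omega
  · rintro ⟨h1, h2⟩
    exact Or.inr ⟨⟨j - 1, by omega⟩, [], (g _).2.1, by simp; omega⟩

lemma kA_graftA_root (k : ℕ) (g : Fin k → ATree) : kA (graftA k g) [] = k := by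
  refine kA_eq _ (fun j => ?_)
  rw [List.nil_append]
  exact mem_graftA_singleton k g j

lemma shiftA_graftA (k : ℕ) (g : Fin k → ATree) (i : Fin k) :
    shiftA (graftA k g) [i.1 + 1] = g i := by
  have hmem : [i.1 + 1] ∈ (graftA k g).1 :=
    (mem_graftA_singleton k g _).mpr ⟨by omega, by have := i.2; omega⟩
  apply Subtype.ext
  rw [shiftA_val _ hmem]
  ext v
  rw [mem_shiftSet]
  rw [show [i.1 + 1] ++ v = (i.1 + 1) :: v from rfl,
    show (graftA k g).1 = graft k fun i => (g i).1 from rfl, mem_graft_iff]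
  constructor
  · rintro (h | ⟨i', w, hw, heq⟩)
    · exact absurd h (by simp)
    · rcases List.cons.injEq .. ▸ heq with ⟨h1, h2⟩
      have hii : i' = i := Fin.ext (by omega)
      subst hii
      rw [← h2] at hw
      exact hw
  · intro hv
    exact Or.inr ⟨i, v, hv, rfl⟩

lemma graftA_shifts (θ : ATree) (k : ℕ) (hθ : kA θ [] = k) :
    graftA k (fun i => shiftA θ [i.1 + 1]) = θ := by
  apply Subtype.ext
  ext v
  rw [show (graftA k fun i => shiftA θ [i.1 + 1]).1
      = graft k fun i => (shiftA θ [i.1 + 1]).1 from rfl, mem_graft_iff]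
  constructor
  · rintro (rfl | ⟨i, w, hw, rfl⟩)
    · exact θ.2.1
    · have hi : [i.1 + 1] ∈ θ.1 :=
        (mem_root_children θ _).mpr ⟨by omega, by rw [hθ]; have := i.2; omega⟩
      have := (mem_shiftA θ hi w).mp hw
      simpa using this
  · intro hv
    cases v with
    | nil => exact Or.inl rfl
    | cons a w =>
      have ha : [a] ∈ θ.1 := prefix_mem θ hv ⟨w, rfl⟩
      have hab : 1 ≤ a ∧ a ≤ k := by rw [← hθ]; exact (mem_root_children θ a).mp ha
      have ha1 : a - 1 + 1 = a := by omega
      refine Or.inr ⟨⟨a - 1, by omega⟩, w, ?_, by simp [ha1]⟩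
      rw [mem_shiftA θ (by simpa [ha1] using ha) w]
      simpa [ha1] using hv

lemma exists_perm_of_aequiv {θ θ' : ATree} {k : ℕ} (hk : kA θ [] = k) (h : AEquiv θ θ') :
    ∃ π : Equiv.Perm (Fin k), ∀ i : Fin k,
      projA (shiftA θ' [i.1 + 1]) = projA (shiftA θ [(π i).1 + 1]) := by
  obtain ⟨Φ, hΦ, him⟩ := h
  have hroot := hΦ [] θ.2.1
  rw [hk] at hroot
  have hmem : ∀ i : Fin k, [i.1 + 1] ∈ θ.1 := fun i =>
    (mem_root_children θ _).mpr ⟨by omega, by rw [hk]; omega⟩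
  have hval : ∀ i : Fin k, Φ [] (i.1 + 1) ∈ Set.Icc 1 k := fun i =>
    hroot.mapsTo (by simp [Set.mem_Icc])
  let φ : Fin k → Fin k := fun i => ⟨Φ [] (i.1 + 1) - 1, by
    have := hval i; simp [Set.mem_Icc] at this; omega⟩
  have hinj : Function.Injective φ := by
    intro i i' hii
    have h1 : Φ [] (i.1 + 1) = Φ [] (i'.1 + 1) := by
      have := congrArg Fin.val hii
      have hv1 := hval i; have hv2 := hval i'
      simp [Set.mem_Icc] at hv1 hv2
      simp only [φ] at this
      omega
    have := hroot.injOn (Set.mem_Icc.mpr ⟨by omega, by omega⟩)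
      (Set.mem_Icc.mpr ⟨by omega, by omega⟩) h1
    exact Fin.ext (by omega)
  let e : Equiv.Perm (Fin k) := Equiv.ofBijective φ (Finite.injective_iff_bijective.mp hinj)
  have hkey : ∀ i : Fin k, projA (shiftA θ' [(e i).1 + 1]) = projA (shiftA θ [i.1 + 1]) := by
    intro i
    have hΦval : (e i).1 + 1 = Φ [] (i.1 + 1) := by
      have := hval i; simp [Set.mem_Icc] at this
      show (φ i).1 + 1 = _
      simp only [φ]; omega
    rw [hΦval]
    exact (projA_eq_iff.mpr (aequiv_shift θ θ' Φ hΦ him (hmem i))).symm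
  refine ⟨e.symm, fun i => ?_⟩
  have := hkey (e.symm i)
  rwa [Equiv.apply_symm_apply] at this

def graftPhi (k : ℕ) (π : Equiv.Perm (Fin k)) (Ψ : Fin k → List ℕ → ℕ → ℕ) :
    List ℕ → ℕ → ℕ
  | [], j => if h : 1 ≤ j ∧ j ≤ k then ((π.symm ⟨j - 1, by omega⟩).1 + 1) else j
  | b :: w, j => if h : 1 ≤ b ∧ b ≤ k then Ψ (π.symm ⟨b - 1, by omega⟩) w j else j

lemma graftPhi_nil (k : ℕ) (π : Equiv.Perm (Fin k)) (Ψ : Fin k → List ℕ → ℕ → ℕ) (j : ℕ) :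
    graftPhi k π Ψ [] j =
      if h : 1 ≤ j ∧ j ≤ k then ((π.symm ⟨j - 1, by omega⟩).1 + 1) else j := rfl

lemma graftPhi_cons (k : ℕ) (π : Equiv.Perm (Fin k)) (Ψ : Fin k → List ℕ → ℕ → ℕ)
    (b : ℕ) (w : List ℕ) (j : ℕ) :
    graftPhi k π Ψ (b :: w) j =
      if h : 1 ≤ b ∧ b ≤ k then Ψ (π.symm ⟨b - 1, by omega⟩) w j else j := rfl

lemma aequiv_graftA {θ : ATree} {k : ℕ} (hk : kA θ [] = k) (g : Fin k → ATree)
    (π : Equiv.Perm (Fin k))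
    (h : ∀ i, AEquiv (shiftA θ [(π i).1 + 1]) (g i)) :
    AEquiv θ (graftA k g) := by
  choose Ψ hΨbij hΨim using h
  set Φ := graftPhi k π Ψ with hΦdef
  have hmemc : ∀ i : Fin k, [(π i).1 + 1] ∈ θ.1 := fun i =>
    (mem_root_children θ _).mpr ⟨by omega, by rw [hk]; have := (π i).2; omega⟩
  -- for b with 1 ≤ b ≤ k : the index
  have hbidx : ∀ (b : ℕ) (hb : 1 ≤ b ∧ b ≤ k), (π (π.symm ⟨b - 1, by omega⟩)).1 + 1 = b := by
    intro b hb
    rw [Equiv.apply_symm_apply]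
    show b - 1 + 1 = b
    omega
  -- tail computation
  have htail : ∀ (b : ℕ) (hb : 1 ≤ b ∧ b ≤ k) (u' : List ℕ),
      relabelAux Φ [b] u' = relabelAux (Ψ (π.symm ⟨b - 1, by omega⟩)) [] u' := by
    intro b hb u'
    rw [show ([b] : List ℕ) = [] ++ [b] from rfl, relabelAux_shift]
    congr 1
    funext w j
    show Φ (b :: w) j = _
    rw [hΦdef, graftPhi_cons, dif_pos hb]
  refine ⟨Φ, ?_, ?_⟩
  · intro u hu
    cases u with
    | nil =>
      rw [hk]
      constructor
      · -- MapsTo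
        intro j hj
        simp only [Set.mem_Icc] at hj ⊢
        rw [hΦdef, graftPhi_nil, dif_pos (by omega : 1 ≤ j ∧ j ≤ k)]
        have := (π.symm ⟨j - 1, by omega⟩).2
        omega
      constructor
      · -- InjOn
        intro j hj j' hj' hjj
        simp only [Set.mem_Icc] at hj hj'
        rw [hΦdef, graftPhi_nil, graftPhi_nil, dif_pos (by omega : 1 ≤ j ∧ j ≤ k),
          dif_pos (by omega : 1 ≤ j' ∧ j' ≤ k)] at hjj
        have h2 : π.symm ⟨j - 1, by omega⟩ = π.symm ⟨j' - 1, by omega⟩ :=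
          Fin.ext (by omega)
        have := π.symm.injective h2
        have := congrArg Fin.val this
        simp at this
        omega
      · -- SurjOn
        intro m hm
        simp only [Set.mem_Icc] at hm
        refine ⟨(π ⟨m - 1, by omega⟩).1 + 1, ?_, ?_⟩
        · have := (π ⟨m - 1, by omega⟩).2
          simp [Set.mem_Icc]
        · have hcond : 1 ≤ (π ⟨m - 1, by omega⟩).1 + 1 ∧ (π ⟨m - 1, by omega⟩).1 + 1 ≤ k := by
            have := (π ⟨m - 1, by omega⟩).2; omega
          rw [hΦdef, graftPhi_nil, dif_pos hcond]
          have harg : (⟨(π ⟨m - 1, by omega⟩).1 + 1 - 1, by omega⟩ : Fin k)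
              = π ⟨m - 1, by omega⟩ := Fin.ext (by simp)
          rw [harg, Equiv.symm_apply_apply]
          show m - 1 + 1 = m
          omega
    | cons b w =>
      have hb1 : [b] ∈ θ.1 := prefix_mem θ hu ⟨w, rfl⟩
      have hb : 1 ≤ b ∧ b ≤ k := by rw [← hk]; exact (mem_root_children θ b).mp hb1
      set i := π.symm ⟨b - 1, by omega⟩ with hidef
      have hbval : (π i).1 + 1 = b := hbidx b hb
      have hwmem : w ∈ (shiftA θ [(π i).1 + 1]).1 := by
        rw [mem_shiftA θ (by rw [hbval]; exact hb1)]
        rw [hbval]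
        simpa using hu
      have hkw : kA (shiftA θ [(π i).1 + 1]) w = kA θ (b :: w) := by
        rw [kA_shiftA θ (by rw [hbval]; exact hb1) w, hbval]
        rfl
      have hfun : Φ (b :: w) = Ψ i w := by
        funext j
        rw [hΦdef, graftPhi_cons, dif_pos hb]
      rw [hfun, ← hkw]
      exact hΨbij i w hwmem
  · -- image equality
    ext v
    rw [show (graftA k g).1 = graft k fun i => (g i).1 from rfl, mem_graft_iff]
    simp only [Finset.mem_image]
    constructor
    · rintro (rfl | ⟨i, w, hw, rfl⟩)
      · exact ⟨[], θ.2.1, rfl⟩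
      · rw [hΨim i] at hw
        obtain ⟨w', hw', rfl⟩ := Finset.mem_image.mp hw
        have hwθ : ((π i).1 + 1) :: w' ∈ θ.1 := by
          have := (mem_shiftA θ (hmemc i) w').mp hw'
          simpa using this
        refine ⟨((π i).1 + 1) :: w', hwθ, ?_⟩
        have hcond : 1 ≤ (π i).1 + 1 ∧ (π i).1 + 1 ≤ k := by
          have := (π i).2; omega
        rw [relabelAux_cons]
        have hhead : Φ [] ((π i).1 + 1) = i.1 + 1 := by
          rw [hΦdef, graftPhi_nil, dif_pos hcond]
          have harg : (⟨(π i).1 + 1 - 1, by omega⟩ : Fin k) = π i := Fin.ext (by simp)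
          rw [harg, Equiv.symm_apply_apply]
        have htl : relabelAux Φ ([] ++ [(π i).1 + 1]) w' = relabelAux (Ψ i) [] w' := by
          have := htail ((π i).1 + 1) hcond w'
          have harg : (π.symm ⟨(π i).1 + 1 - 1, by omega⟩ : Fin k) = i := by
            have h5 : (⟨(π i).1 + 1 - 1, by omega⟩ : Fin k) = π i := Fin.ext (by simp)
            rw [h5, Equiv.symm_apply_apply]
          rw [harg] at this
          exact this
        rw [hhead, htl]
    · rintro ⟨u, hu, rfl⟩
      cases u with
      | nil => exact Or.inl rfl
      | cons b w =>
        have hb1 : [b] ∈ θ.1 := prefix_mem θ hu ⟨w, rfl⟩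
        have hb : 1 ≤ b ∧ b ≤ k := by rw [← hk]; exact (mem_root_children θ b).mp hb1
        set i := π.symm ⟨b - 1, by omega⟩ with hidef
        have hbval : (π i).1 + 1 = b := hbidx b hb
        refine Or.inr ⟨i, relabelAux (Ψ i) [] w, ?_, ?_⟩
        · rw [hΨim i]
          refine Finset.mem_image.mpr ⟨w, ?_, rfl⟩
          rw [mem_shiftA θ (by rw [hbval]; exact hb1), hbval]
          simpa using hu
        · rw [relabelAux_cons]
          have hhead : Φ [] b = i.1 + 1 := by
            rw [hΦdef, graftPhi_nil, dif_pos hb]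
          have htl := htail b hb w
          rw [show ([] : List ℕ) ++ [b] = [b] from rfl] at *
          rw [hhead, htl]

lemma fiber_eq_aequiv (θ : ATree) : fiber (projA θ) = { θ' | AEquiv θ θ' } := by
  ext θ'
  rw [mem_fiber_iff]
  constructor
  · intro h; exact aequiv_symm (projA_eq_iff.mp h)
  · intro h; exact projA_eq_iff.mpr (aequiv_symm h)

lemma self_mem_fiber (θ : ATree) : θ ∈ fiber (projA θ) := rfl

lemma fiber_finite (θ : ATree) : (fiber (projA θ)).Finite := by
  classical
  set M := θ.1.sup (kA θ) with hM
  have hkM : ∀ w ∈ θ.1, kA θ w ≤ M := fun w hw => Finset.le_sup hw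
  -- parameterizing map
  let mkPhi : (θ.1 → Fin (M + 1) → Fin (M + 1)) → List ℕ → ℕ → ℕ := fun d w j =>
    if hw : w ∈ θ.1 ∧ j ≤ M then (d ⟨w, hw.1⟩ ⟨j, by omega⟩ : ℕ) else j
  let h : (θ.1 → Fin (M + 1) → Fin (M + 1)) → ATree := fun d =>
    if hh : IsOTree (θ.1.image (relabelAux (mkPhi d) [])) then ⟨_, hh⟩ else rootA
  have hsub : fiber (projA θ) ⊆ Set.range h := by
    intro θ' hθ'
    rw [fiber_eq_aequiv] at hθ'
    obtain ⟨Φ, hΦ, him⟩ := hθ'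
    let d : θ.1 → Fin (M + 1) → Fin (M + 1) := fun w j =>
      if hj : Φ w.1 j.1 ≤ M then ⟨Φ w.1 j.1, by omega⟩ else ⟨0, by omega⟩
    have hagree : ∀ w j, w ∈ θ.1 → w ++ [j] ∈ θ.1 → Φ w j = mkPhi d w j := by
      intro w j hw hwj
      have hj : 1 ≤ j ∧ j ≤ kA θ w := (mem_children_iff θ hw j).mp hwj
      have hjM : j ≤ M := le_trans hj.2 (hkM w hw)
      have hΦval : Φ w j ∈ Set.Icc 1 (kA θ w) :=
        (hΦ w hw).mapsTo (Set.mem_Icc.mpr hj)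
      have hΦM : Φ w j ≤ M := le_trans (Set.mem_Icc.mp hΦval).2 (hkM w hw)
      show _ = mkPhi d w j
      simp only [mkPhi, dif_pos (And.intro hw hjM), d, dif_pos hΦM]
    have himeq : θ.1.image (relabelAux Φ []) = θ.1.image (relabelAux (mkPhi d) []) := by
      refine Finset.image_congr ?_
      intro u hu
      exact relabelAux_congr θ Φ (mkPhi d) hagree u [] θ.2.1 (by simpa using hu)
    have hIsO : IsOTree (θ.1.image (relabelAux (mkPhi d) [])) := by
      rw [← himeq, ← him]; exact θ'.2
    refine ⟨d, ?_⟩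
    show (if hh : IsOTree (θ.1.image (relabelAux (mkPhi d) [])) then
      (⟨_, hh⟩ : ATree) else rootA) = θ'
    rw [dif_pos hIsO]
    exact Subtype.ext (show Finset.image (relabelAux (mkPhi d) []) θ.1 = θ'.1 by
      rw [← himeq, him])
  exact Set.Finite.subset (Set.finite_range h) hsub

lemma fiber_nonempty (θ : ATree) : (fiber (projA θ)).Nonempty := ⟨θ, self_mem_fiber θ⟩

lemma tsum_const_ennreal {ι : Type*} [Finite ι] (a : ℝ≥0∞) :
    ∑' _ : ι, a = (Nat.card ι : ℝ≥0∞) * a := by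
  cases nonempty_fintype ι
  rw [tsum_fintype, Finset.sum_const, Nat.card_eq_fintype_card, Finset.card_univ, nsmul_eq_mul]

abbrev tupleS {k : ℕ} (ξv : Fin k → AQ) : Type :=
  {g : Fin k → ATree // ∃ π : Equiv.Perm (Fin k), ∀ i, projA (g i) = ξv (π i)}

abbrev stabH {k : ℕ} (ξv : Fin k → AQ) : Type :=
  {σ : Equiv.Perm (Fin k) // ∀ i, ξv (σ i) = ξv i}

abbrev Ptype {k : ℕ} (ξv : Fin k → AQ) (π : Equiv.Perm (Fin k)) : Type :=
  {g : Fin k → ATree // ∀ i, projA (g i) = ξv (π i)}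

abbrev Ctype {k : ℕ} (ξv : Fin k → AQ) (g : Fin k → ATree) : Type :=
  {π : Equiv.Perm (Fin k) // ∀ i, projA (g i) = ξv (π i)}

instance stabH_nonempty {k : ℕ} (ξv : Fin k → AQ) : Nonempty (stabH ξv) :=
  ⟨⟨1, fun _ => rfl⟩⟩

lemma card_cg {k : ℕ} (ξv : Fin k → AQ) (g : Fin k → ATree) (π₀ : Equiv.Perm (Fin k))
    (hπ₀ : ∀ i, projA (g i) = ξv (π₀ i)) :
    Nat.card (Ctype ξv g) = Nat.card (stabH ξv) := by
  refine Nat.card_congr ?_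
  refine ⟨fun π => ⟨π₀.symm.trans π.1, ?_⟩, fun σ => ⟨π₀.trans σ.1, ?_⟩, ?_, ?_⟩
  · intro i
    show ξv (π.1 (π₀.symm i)) = ξv i
    rw [← π.2 (π₀.symm i), hπ₀ (π₀.symm i), Equiv.apply_symm_apply]
  · intro i
    show projA (g i) = ξv (σ.1 (π₀ i))
    rw [σ.2 (π₀ i), hπ₀ i]
  · intro π
    apply Subtype.ext; apply Equiv.ext; intro i
    show π.1 (π₀.symm (π₀ i)) = π.1 i
    rw [Equiv.symm_apply_apply]
  · intro σ
    apply Subtype.ext; apply Equiv.ext; intro i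
    show σ.1 (π₀ (π₀.symm i)) = σ.1 i
    rw [Equiv.apply_symm_apply]

lemma perm_count {k : ℕ} (ξv : Fin k → AQ) (F : (Fin k → ATree) → ℝ≥0∞)
    (hFs : ∀ (g : Fin k → ATree) (π : Equiv.Perm (Fin k)), F (g ∘ π) = F g) :
    (Nat.card (stabH ξv) : ℝ≥0∞) * ∑' g : tupleS ξv, F g.1 =
    (Nat.factorial k : ℝ≥0∞) * ∑' g : (∀ i, fiber (ξv i)), F (fun i => (g i).1) := by
  classical
  let T : Type :=
    {p : Equiv.Perm (Fin k) × (Fin k → ATree) // ∀ i, projA (p.2 i) = ξv (p.1 i)}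
  have way1 : ∑' p : T, F p.1.2 =
      (Nat.factorial k : ℝ≥0∞) * ∑' g : (∀ i, fiber (ξv i)), F (fun i => (g i).1) := by
    let e : T ≃ Σ π : Equiv.Perm (Fin k), Ptype ξv π :=
      ⟨fun p => ⟨p.1.1, p.1.2, p.2⟩, fun s => ⟨(s.1, s.2.1), s.2.2⟩,
        fun p => rfl, fun s => rfl⟩
    have step1 : ∑' p : T, F p.1.2 = ∑' s : Σ π : Equiv.Perm (Fin k), Ptype ξv π, F s.2.1 := by
      rw [← Equiv.tsum_eq e (fun s : Σ π : Equiv.Perm (Fin k), Ptype ξv π => F s.2.1)]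
      exact tsum_congr (fun p => rfl)
    have step2 : ∑' s : Σ π : Equiv.Perm (Fin k), Ptype ξv π, F s.2.1 =
        ∑' (π : Equiv.Perm (Fin k)), ∑' (g : Ptype ξv π), F g.1 :=
      ENNReal.tsum_sigma (fun (_ : Equiv.Perm (Fin k)) (g : Ptype ξv _) => F g.1)
    have step3 : ∀ π : Equiv.Perm (Fin k), ∑' (g : Ptype ξv π), F g.1 =
        ∑' g : (∀ i, fiber (ξv i)), F (fun i => (g i).1) := by
      intro π
      let e1 : (∀ a, ↥(fiber (ξv (π a)))) ≃ Ptype ξv π :=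
        ⟨fun h => ⟨fun i => (h i).1, fun i => (h i).2⟩,
         fun g i => ⟨g.1 i, g.2 i⟩, fun h => rfl, fun g => rfl⟩
      let E := Equiv.piCongrLeft (fun i => ↥(fiber (ξv i))) π
      have s1 : ∑' (g : Ptype ξv π), F g.1 =
          ∑' c : (∀ a, ↥(fiber (ξv (π a)))), F (fun i => (c i).1) := by
        rw [← Equiv.tsum_eq e1 (fun g : Ptype ξv π => F g.1)]
        exact tsum_congr (fun c => rfl)
      have s2 : ∑' c : (∀ a, ↥(fiber (ξv (π a)))), F (fun i => (c i).1) =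
          ∑' hb : (∀ b, ↥(fiber (ξv b))), F (fun i => ((E.symm hb) i).1) := by
        rw [← Equiv.tsum_eq E.symm
          (fun c : ∀ a, ↥(fiber (ξv (π a))) => F (fun i => (c i).1))]
      have s3 : ∀ hb : (∀ b, ↥(fiber (ξv b))),
          F (fun i => ((E.symm hb) i).1) = F (fun i => (hb i).1) := by
        intro hb
        have heq : (fun i => ((E.symm hb) i).1) = (fun i => (hb i).1) ∘ π := by
          funext i
          exact congrArg Subtype.val
            (Equiv.piCongrLeft_symm_apply (fun i => ↥(fiber (ξv i))) π hb i)
        rw [heq, hFs]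
      rw [s1, s2]
      exact tsum_congr s3
    rw [step1, step2]
    rw [tsum_congr step3, tsum_const_ennreal]
    congr 2
    rw [Nat.card_eq_fintype_card, Fintype.card_perm, Fintype.card_fin]
  have way2 : ∑' p : T, F p.1.2 =
      (Nat.card (stabH ξv) : ℝ≥0∞) * ∑' g : tupleS ξv, F g.1 := by
    let e : T ≃ Σ g : tupleS ξv, Ctype ξv g.1 :=
      ⟨fun p => ⟨⟨p.1.2, ⟨p.1.1, p.2⟩⟩, ⟨p.1.1, p.2⟩⟩,
       fun s => ⟨(s.2.1, s.1.1), s.2.2⟩, fun p => rfl, fun s => rfl⟩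
    have step1 : ∑' p : T, F p.1.2 = ∑' s : Σ g : tupleS ξv, Ctype ξv g.1, F s.1.1 := by
      rw [← Equiv.tsum_eq e (fun s : Σ g : tupleS ξv, Ctype ξv g.1 => F s.1.1)]
      exact tsum_congr (fun p => rfl)
    have step2 : ∑' s : Σ g : tupleS ξv, Ctype ξv g.1, F s.1.1 =
        ∑' (g : tupleS ξv), ∑' (_ : Ctype ξv g.1), F g.1 :=
      ENNReal.tsum_sigma (fun (g : tupleS ξv) (_ : Ctype ξv g.1) => F g.1)
    rw [step1, step2]
    have step3 : ∀ g : tupleS ξv, ∑' (_ : Ctype ξv g.1), F g.1 =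
        (Nat.card (stabH ξv) : ℝ≥0∞) * F g.1 := by
      intro g
      rw [tsum_const_ennreal, card_cg ξv g.1 g.2.choose g.2.choose_spec]
    rw [tsum_congr step3]
    exact ENNReal.tsum_mul_left
  rw [← way2, way1]

lemma ennreal_solve {a b x y S P : ℝ≥0∞}
    (ha0 : a ≠ 0) (hat : a ≠ ∞) (hb0 : b ≠ 0) (hbt : b ≠ ∞)
    (hx0 : x ≠ 0) (hxt : x ≠ ∞) (hy0 : y ≠ 0) (hyt : y ≠ ∞)
    (k1 : a * S = b * P) (k2 : a * x = b * y) : x⁻¹ * S = y⁻¹ * P := by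
  have hS : S = a⁻¹ * b * P := by
    rw [mul_assoc, ← k1, ← mul_assoc, ENNReal.inv_mul_cancel ha0 hat, one_mul]
  have hy : y = b⁻¹ * a * x := by
    rw [mul_assoc, k2, ← mul_assoc, ENNReal.inv_mul_cancel hb0 hbt, one_mul]

  rw [hS, hy]
  have hinv : (b⁻¹ * a * x)⁻¹ = b * a⁻¹ * x⁻¹ := by
    rw [ENNReal.mul_inv (Or.inr hxt) (Or.inr hx0),
      ENNReal.mul_inv (Or.inr hat) (Or.inr ha0), inv_inv]
  rw [hinv]
  ring

/-- **The combinatorial identity (2.2).** Let `ξ ∈ 𝔸` with `k_∅(ξ) = k > 0`, let `θ`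
be any representative of `ξ`, and let `ξ¹,…,ξ^k` be the classes of the shifted trees
`τ_1θ,…,τ_kθ`. Then for every symmetric measurable `F : 𝒜^k → ℝ₊`, the average of
`F(τ_1θ',…,τ_kθ')` over the fiber `𝔭⁻¹(ξ)` equals the average of `F(θ_1,…,θ_k)` over
`𝔭⁻¹(ξ¹) × ⋯ × 𝔭⁻¹(ξ^k)`. -/
theorem fiber_average_symmetric
    (k : ℕ) (hk : 0 < k) (θ : ATree) (hθ : kA θ [] = k)
    (F : (Fin k → ATree) → ℝ≥0∞) (hFm : Measurable F)
    (hFs : ∀ (g : Fin k → ATree) (π : Equiv.Perm (Fin k)), F (g ∘ π) = F g) :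
    ((fiber (projA θ)).ncard : ℝ≥0∞)⁻¹ *
        ∑' θ' : fiber (projA θ), F (fun i => shiftA θ'.1 [i.1 + 1]) =
      (∏ i : Fin k, ((fiber (projA (shiftA θ [i.1 + 1]))).ncard : ℝ≥0∞)⁻¹) *
        ∑' g : (∀ i : Fin k, fiber (projA (shiftA θ [i.1 + 1]))),
          F (fun i => (g i).1) := by
  classical
  let ξv : Fin k → AQ := fun i => projA (shiftA θ [i.1 + 1])
  show ((fiber (projA θ)).ncard : ℝ≥0∞)⁻¹ *
        ∑' θ' : fiber (projA θ), F (fun i => shiftA θ'.1 [i.1 + 1]) =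
      (∏ i : Fin k, ((fiber (ξv i)).ncard : ℝ≥0∞)⁻¹) *
        ∑' g : (∀ i : Fin k, fiber (ξv i)), F (fun i => (g i).1)
  -- the equivalence between the fiber and tupleS
  let e1 : ↥(fiber (projA θ)) ≃ tupleS ξv :=
    { toFun := fun θ' => ⟨fun i => shiftA θ'.1 [i.1 + 1], by
        have haeq : AEquiv θ θ'.1 := aequiv_symm (projA_eq_iff.mp θ'.2)
        exact exists_perm_of_aequiv hθ haeq⟩
      invFun := fun g => ⟨graftA k g.1, by
        obtain ⟨π, hπ⟩ := g.2
        have haeq : ∀ i, AEquiv (shiftA θ [(π i).1 + 1]) (g.1 i) :=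
          fun i => projA_eq_iff.mp (hπ i).symm
        exact (projA_eq_iff.mpr (aequiv_graftA hθ g.1 π haeq)).symm⟩
      left_inv := fun θ' => by
        apply Subtype.ext
        have hkk : kA θ'.1 [] = k := by
          rw [kA_root_eq (aequiv_symm (projA_eq_iff.mp θ'.2)), hθ]
        exact graftA_shifts θ'.1 k hkk
      right_inv := fun g => Subtype.ext (funext fun i => shiftA_graftA k g.1 i) }
  -- finiteness
  have hfin : (fiber (projA θ)).Finite := fiber_finite θ
  haveI : Finite ↥(fiber (projA θ)) := hfin.to_subtype
  haveI : Finite (tupleS ξv) := Finite.of_equiv _ e1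
  have hfini : ∀ i : Fin k, (fiber (ξv i)).Finite := fun i => fiber_finite _
  haveI : ∀ i : Fin k, Finite ↥(fiber (ξv i)) := fun i => (hfini i).to_subtype
  -- transfer of the left sum
  have hLHS : ∑' θ' : fiber (projA θ), F (fun i => shiftA θ'.1 [i.1 + 1]) =
      ∑' g : tupleS ξv, F g.1 :=
    (tsum_congr (fun θ' => rfl)).trans (Equiv.tsum_eq e1 (fun g : tupleS ξv => F g.1))
  -- cardinal transfer
  have hcard : ((fiber (projA θ)).ncard : ℕ) = Nat.card (tupleS ξv) := by
    rw [← Nat.card_coe_set_eq]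
    exact Nat.card_congr e1
  -- the two identities from perm_count
  have key1 := perm_count ξv F hFs
  have key2 : (Nat.card (stabH ξv) : ℝ≥0∞) * ∑' (_ : tupleS ξv), (1 : ℝ≥0∞) =
      (Nat.factorial k : ℝ≥0∞) * ∑' (_ : ∀ i, fiber (ξv i)), (1 : ℝ≥0∞) :=
    perm_count ξv (fun _ => 1) (fun _ _ => rfl)
  rw [tsum_const_ennreal, tsum_const_ennreal, mul_one, mul_one] at key2
  have hpicard : (Nat.card (∀ i, ↥(fiber (ξv i))) : ℝ≥0∞) =
      ∏ i : Fin k, ((fiber (ξv i)).ncard : ℝ≥0∞) := by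
    rw [Nat.card_pi, Nat.cast_prod]
    refine Finset.prod_congr rfl (fun i _ => ?_)
    rw [Nat.card_coe_set_eq]
  rw [hpicard, ← hcard] at key2
  -- positivity
  have hc0 : (Nat.card (stabH ξv) : ℝ≥0∞) ≠ 0 := by
    simp only [ne_eq, Nat.cast_eq_zero]
    exact Nat.card_ne_zero.mpr ⟨inferInstance, inferInstance⟩
  have hct : (Nat.card (stabH ξv) : ℝ≥0∞) ≠ ∞ := ENNReal.natCast_ne_top _
  have hb0 : (Nat.factorial k : ℝ≥0∞) ≠ 0 := by
    simp only [ne_eq, Nat.cast_eq_zero]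
    exact Nat.factorial_ne_zero k
  have hbt : (Nat.factorial k : ℝ≥0∞) ≠ ∞ := ENNReal.natCast_ne_top _
  have hn0 : ((fiber (projA θ)).ncard : ℝ≥0∞) ≠ 0 := by
    simp only [ne_eq, Nat.cast_eq_zero]
    exact ((Set.ncard_pos hfin).mpr (fiber_nonempty θ)).ne'
  have hnt : ((fiber (projA θ)).ncard : ℝ≥0∞) ≠ ∞ := ENNReal.natCast_ne_top _
  have hm0 : ∀ i : Fin k, ((fiber (ξv i)).ncard : ℝ≥0∞) ≠ 0 := by
    intro i
    simp only [ne_eq, Nat.cast_eq_zero]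
    exact ((Set.ncard_pos (hfini i)).mpr (fiber_nonempty (shiftA θ [i.1 + 1]))).ne'
  have hy0 : (∏ i : Fin k, ((fiber (ξv i)).ncard : ℝ≥0∞)) ≠ 0 :=
    Finset.prod_ne_zero_iff.mpr (fun i _ => hm0 i)
  have hyt : (∏ i : Fin k, ((fiber (ξv i)).ncard : ℝ≥0∞)) ≠ ∞ :=
    (ENNReal.prod_lt_top (fun i _ => ENNReal.natCast_lt_top _)).ne
  have hprodinv : (∏ i : Fin k, ((fiber (ξv i)).ncard : ℝ≥0∞)⁻¹) =
      (∏ i : Fin k, ((fiber (ξv i)).ncard : ℝ≥0∞))⁻¹ :=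
    (ENNReal.prod_inv_distrib (fun i _ j _ _ => Or.inl (hm0 i))).symm
  rw [hLHS, hprodinv]
  exact ennreal_solve hc0 hct hb0 hbt hn0 hnt hy0 hyt key1 key2
end
end

section
/- Let Θ be an infinite measure on 𝕋 with Θ(H(𝒯)=0)=0 and 0<Θ(H(𝒯)>t)<∞ for every t>0, satisfying the regenerative property (R), and set v(t)=Θ(H(𝒯)>t). Then for every t>0 and h>0, ∫ Z(t,t+h)(𝒯) Θ(d𝒯) ≤ v(h). -/
open MeasureTheory Metric Set
open scoped ENNReal NNReal Topology Classical

noncomputable section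

section AuxGeom

/-- The one-point rooted compact metric space. -/
def ptPCMS : PCMS where
  carrier := PUnit
  met := inferInstance
  cpt := inferInstance
  root := PUnit.unit

/-- The class of the one-point tree. -/
def ptMT : MT := ptPCMS.toMT

lemma ptMT_out_subsingleton : Subsingleton (ptMT.out.carrier) := by
  have h : ptMT.out ≈ ptPCMS := Quotient.exact (Quotient.out_eq ptMT)
  obtain ⟨e, -⟩ := h
  haveI : Subsingleton ptPCMS.carrier := inferInstanceAs (Subsingleton PUnit)
  exact e.toEquiv.subsingleton

lemma PCMS.bounded_univ (X : PCMS) : Bornology.IsBounded (Set.univ : Set X.carrier) :=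
  isCompact_univ.isBounded

lemma pghDist_mem_nonneg {X Y : PCMS} {r : ℝ}
    (hr : r ∈ { r : ℝ |
      ∃ (E : Type) (_ : MetricSpace E) (f : X.carrier → E) (g : Y.carrier → E),
        Isometry f ∧ Isometry g ∧
        max (hausdorffDist (Set.range f) (Set.range g)) (dist (f X.root) (g Y.root)) ≤ r }) :
    0 ≤ r := by
  obtain ⟨E, mE, f, g, hf, hg, hm⟩ := hr
  exact le_trans dist_nonneg ((le_max_right _ _).trans hm)


lemma pghDist_mem_of_pos {X Y : PCMS} (hY : Subsingleton Y.carrier) {ε : ℝ} (hε : 0 < ε) :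
    (Metric.diam (Set.univ : Set X.carrier) / 2 + ε) ∈ { r : ℝ |
      ∃ (E : Type) (_ : MetricSpace E) (f : X.carrier → E) (g : Y.carrier → E),
        Isometry f ∧ Isometry g ∧
        max (hausdorffDist (Set.range f) (Set.range g)) (dist (f X.root) (g Y.root)) ≤ r } := by
  set K : ℝ := Metric.diam (Set.univ : Set X.carrier) / 2 + ε with hK
  have hK0 : 0 < K := by
    have := Metric.diam_nonneg (s := (Set.univ : Set X.carrier))
    positivity
  have Hyp : ∀ p q : X.carrier,
      |dist (id p) (id q) - dist ((fun _ => Y.root) p) ((fun _ => Y.root) q)| ≤ 2 * K := by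
    intro p q
    simp only [id, dist_self, sub_zero]
    rw [abs_of_nonneg dist_nonneg, hK]
    have : dist p q ≤ Metric.diam (Set.univ : Set X.carrier) :=
      Metric.dist_le_diam_of_mem X.bounded_univ (Set.mem_univ _) (Set.mem_univ _)
    linarith
  letI E := glueMetricApprox (id : X.carrier → X.carrier) (fun _ : X.carrier => Y.root) K hK0 Hyp
  refine ⟨X.carrier ⊕ Y.carrier, E, Sum.inl, Sum.inr, ?_, ?_, ?_⟩
  · exact Isometry.of_dist_eq fun a b => rfl
  · exact Isometry.of_dist_eq fun a b => rfl
  · have hcross : ∀ a : X.carrier, ∀ b : Y.carrier,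
        dist (Sum.inl a : X.carrier ⊕ Y.carrier) (Sum.inr b) = K := by
      intro a b
      have hb : b = Y.root := Subsingleton.elim _ _
      subst hb
      exact Metric.glueDist_glued_points (id : X.carrier → X.carrier)
        (fun _ : X.carrier => Y.root) K a
    apply max_le
    · apply Metric.hausdorffDist_le_of_mem_dist hK0.le
      · rintro x ⟨a, rfl⟩
        exact ⟨Sum.inr Y.root, Set.mem_range_self _, le_of_eq (hcross a Y.root)⟩
      · rintro y ⟨b, rfl⟩
        refine ⟨Sum.inl X.root, Set.mem_range_self _, ?_⟩
        rw [dist_comm]; exact le_of_eq (hcross X.root b)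
    · exact le_of_eq (hcross X.root Y.root)

lemma half_diam_le_pghDist (X Y : PCMS) (hY : Subsingleton Y.carrier) :
    Metric.diam (Set.univ : Set X.carrier) / 2 ≤ pghDist X Y := by
  apply le_csInf
  · exact ⟨_, pghDist_mem_of_pos hY one_pos⟩
  · rintro r ⟨E, mE, f, g, hf, hg, hm⟩
    have hr0 : 0 ≤ r := le_trans dist_nonneg ((le_max_right _ _).trans hm)
    have hne : EMetric.hausdorffEdist (Set.range f) (Set.range g) ≠ ⊤ :=
      Metric.hausdorffEdist_ne_top_of_nonempty_of_bounded (Set.range_nonempty f)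
        (Set.range_nonempty g) (isCompact_range hf.continuous).isBounded
        (isCompact_range hg.continuous).isBounded
    have hrange : Set.range g = {g Y.root} := by
      ext z; constructor
      · rintro ⟨b, rfl⟩; simp [Subsingleton.elim b Y.root]
      · rintro rfl; exact ⟨Y.root, rfl⟩
    have key : ∀ a : X.carrier, dist (f a) (g Y.root) ≤ r := by
      intro a
      have h1 : Metric.infDist (f a) (Set.range g) ≤
          Metric.hausdorffDist (Set.range f) (Set.range g) :=
        Metric.infDist_le_hausdorffDist_of_mem (Set.mem_range_self a) hne
      have h2 := h1.trans ((le_max_left _ _).trans hm)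
      rwa [hrange, Metric.infDist_singleton] at h2
    have hdiam : Metric.diam (Set.univ : Set X.carrier) ≤ 2 * r := by
      apply Metric.diam_le_of_forall_dist_le (by linarith)
      intro a _ b _
      have : dist a b = dist (f a) (f b) := (hf.dist_eq a b).symm
      rw [this]
      calc dist (f a) (f b) ≤ dist (f a) (g Y.root) + dist (g Y.root) (f b) :=
            dist_triangle _ _ _
        _ ≤ r + r := add_le_add (key a) (by rw [dist_comm]; exact key b)
        _ = 2 * r := by ring
    linarith

lemma pghDist_le_half_diam (X Y : PCMS) (hY : Subsingleton Y.carrier) :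
    pghDist X Y ≤ Metric.diam (Set.univ : Set X.carrier) / 2 := by
  apply le_of_forall_pos_le_add
  intro ε hε
  exact csInf_le ⟨0, fun r hr => pghDist_mem_nonneg hr⟩ (pghDist_mem_of_pos hY hε)

lemma pghDist_eq_half_diam (X Y : PCMS) (hY : Subsingleton Y.carrier) :
    pghDist X Y = Metric.diam (Set.univ : Set X.carrier) / 2 :=
  le_antisymm (pghDist_le_half_diam X Y hY) (half_diam_le_pghDist X Y hY)

end AuxGeom
section AuxPhi

/-- `φ(x) = d_GH(x, point)`, which equals half the diameter. -/
def phiMT (x : MT) : ℝ := mGH x ptMT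

lemma phiMT_eq (x : MT) :
    phiMT x = Metric.diam (Set.univ : Set x.out.carrier) / 2 :=
  pghDist_eq_half_diam _ _ ptMT_out_subsingleton

lemma diam_univ_coe {α : Type*} [MetricSpace α] (S : Set α) :
    Metric.diam (Set.univ : Set S) = Metric.diam S := by
  have h := (isometry_subtype_coe (s := S)).diam_image (Set.univ)
  rw [Subtype.coe_image_univ] at h
  exact h.symm

lemma diam_out_toMT (W : PCMS) :
    Metric.diam (Set.univ : Set ((W.toMT).out.carrier))
      = Metric.diam (Set.univ : Set W.carrier) := by
  obtain ⟨e, -⟩ := Quotient.exact (Quotient.out_eq W.toMT)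
  have h := e.isometry.diam_image (Set.univ : Set ((W.toMT).out.carrier))
  rw [Set.image_univ, e.surjective.range_eq] at h
  exact h.symm

lemma phiMT_toMT (W : PCMS) :
    phiMT (W.toMT) = Metric.diam (Set.univ : Set W.carrier) / 2 := by
  rw [phiMT_eq, diam_out_toMT]

lemma PCMS.bddAbove_dist (X : PCMS) :
    BddAbove (Set.range fun σ : X.carrier => dist X.root σ) := by
  refine ⟨Metric.diam (Set.univ : Set X.carrier), ?_⟩
  rintro r ⟨σ, rfl⟩
  exact Metric.dist_le_diam_of_mem X.bounded_univ (Set.mem_univ _) (Set.mem_univ _)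

lemma PCMS.dist_root_le_height (X : PCMS) (σ : X.carrier) : dist X.root σ ≤ X.height :=
  le_ciSup X.bddAbove_dist σ

lemma PCMS.height_nonneg (X : PCMS) : 0 ≤ X.height := by
  have := X.dist_root_le_height X.root
  simpa [dist_self] using this

lemma PCMS.height_le_diam (X : PCMS) :
    X.height ≤ Metric.diam (Set.univ : Set X.carrier) :=
  ciSup_le fun σ =>
    Metric.dist_le_diam_of_mem X.bounded_univ (Set.mem_univ _) (Set.mem_univ _)

lemma PCMS.diam_le_two_height (X : PCMS) :
    Metric.diam (Set.univ : Set X.carrier) ≤ 2 * X.height := by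
  apply Metric.diam_le_of_forall_dist_le (by have := X.height_nonneg; linarith)
  intro a _ b _
  calc dist a b ≤ dist a X.root + dist X.root b := dist_triangle _ _ _
    _ ≤ X.height + X.height := by
        refine add_le_add ?_ (X.dist_root_le_height b)
        rw [dist_comm]; exact X.dist_root_le_height a
    _ = 2 * X.height := by ring

lemma half_height_le_phiMT (T : TT) : heightT T / 2 ≤ phiMT T.1 := by
  rw [phiMT_eq]
  have h1 : heightT T ≤ Metric.diam (Set.univ : Set (T.1.out.carrier)) :=
    PCMS.height_le_diam _
  linarith

lemma phiMT_le_height (T : TT) : phiMT T.1 ≤ heightT T := by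
  rw [phiMT_eq]
  have := PCMS.diam_le_two_height (T.1.out)
  have h2 : heightT T = T.1.out.height := rfl
  linarith

lemma phiMT_subPCMS (X : PCMS) (t : ℝ) (C : Set X.carrier) :
    phiMT ((subPCMS X t C).toMT)
      = Metric.diam (closure C ∪ {anchor X t C} : Set X.carrier) / 2 := by
  rw [phiMT_toMT]
  have : Metric.diam (Set.univ : Set ((subPCMS X t C).carrier))
      = Metric.diam (closure C ∪ {anchor X t C} : Set X.carrier) :=
    diam_univ_coe _
  rw [this]

lemma phiMT_subtreesVec_le (T : TT) (t h : ℝ) (p : ℕ) (i : Fin p) :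
    phiMT (subtreesVecT T t h p i) ≤ phiMT T.1 := by
  show phiMT ((subPCMS T.1.out t (enumSet T.1.out (bigComps T.1.out t h) p i)).toMT) ≤ _
  rw [phiMT_subPCMS, phiMT_eq]
  have : Metric.diam
        (closure (enumSet T.1.out (bigComps T.1.out t h) p i)
          ∪ {anchor T.1.out t (enumSet T.1.out (bigComps T.1.out t h) p i)} :
          Set T.1.out.carrier)
      ≤ Metric.diam (Set.univ : Set T.1.out.carrier) :=
    Metric.diam_mono (Set.subset_univ _) (PCMS.bounded_univ _)
  linarith

lemma ZT_eq_ncard (T : TT) {t : ℝ} (ht : t ≠ 0) (h : ℝ) :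
    ZT T t h = (bigComps T.1.out t h).ncard := by
  unfold ZT Zp
  rw [if_neg ht]

lemma phiMT_subtreesVec_junk (T : TT) {t : ℝ} (ht : t ≠ 0) (h : ℝ) {p : ℕ}
    (hp : p ≠ ZT T t h) (i : Fin p) :
    phiMT (subtreesVecT T t h p i) = 0 := by
  have hne : ¬ Nonempty (Fin p ≃ ↥(bigComps T.1.out t h)) := by
    rintro ⟨e⟩
    apply hp
    rw [ZT_eq_ncard T ht h]
    have h1 : Nat.card ↥(bigComps T.1.out t h) = p := by
      rw [← Nat.card_congr e, Nat.card_eq_fintype_card, Fintype.card_fin]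
    rw [← Nat.card_coe_set_eq, h1]
  show phiMT ((subPCMS T.1.out t (enumSet T.1.out (bigComps T.1.out t h) p i)).toMT) = 0
  unfold enumSet
  rw [dif_neg hne, phiMT_subPCMS]
  rw [closure_empty, Set.empty_union, Metric.diam_singleton]
  norm_num

end AuxPhi

section AuxMeas

/-- The tall-diameter event in `MT`. -/
def Ub (b : ℝ) : Set MT := {x | b ≤ phiMT x}

lemma measurableSet_Ub (b : ℝ) : MeasurableSet (Ub b) := by
  have h : Ub b = {x | mGH x ptMT < b}ᶜ := by
    ext x; simp [Ub, phiMT, not_lt]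
  rw [h]
  have hmem : {x : MT | mGH x ptMT < b} ∈ { s : Set MT | ∃ y r, s = { x | mGH x y < r } } :=
    ⟨ptMT, b, rfl⟩
  exact (MeasurableSpace.measurableSet_generateFrom hmem).compl

lemma Ub_antitone {b b' : ℝ} (hbb : b ≤ b') : Ub b' ⊆ Ub b :=
  fun x hx => le_trans hbb hx

end AuxMeas
section AuxLintegral
open MeasureTheory

/-- On functions vanishing outside `S` (not necessarily measurable), the lower Lebesgue
integral over `S` agrees with the integral over the whole space. -/
lemma lintegral_restrict_of_support {α : Type*} [MeasurableSpace α] (μ : Measure α)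
    {S : Set α} {g : α → ℝ≥0∞} (hg : ∀ x, x ∉ S → g x = 0) :
    ∫⁻ x in S, g x ∂μ = ∫⁻ x, g x ∂μ := by
  apply le_antisymm
  · exact lintegral_mono' Measure.restrict_le_self le_rfl
  · rw [lintegral_def μ fun x => g x]
    apply iSup₂_le
    intro φ hφ
    have hN : MeasurableSet {x | φ x ≠ 0} :=
      φ.measurable ((measurableSet_singleton (0 : ℝ≥0∞)).compl)
    have hNS : {x | φ x ≠ 0} ⊆ S := by
      intro x hx
      by_contra hxS
      exact hx (le_antisymm ((hφ x).trans (le_of_eq (hg x hxS))) zero_le)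
    calc φ.lintegral μ = ∫⁻ x, φ x ∂μ := (φ.lintegral_eq_lintegral μ).symm
      _ = ∫⁻ x, ({x | φ x ≠ 0}).indicator (⇑φ) x ∂μ := by
          congr 1
          funext x
          by_cases hx : φ x = 0
          · simp [Set.indicator, hx]
          · simp [Set.indicator, hx]
      _ = ∫⁻ x in {x | φ x ≠ 0}, φ x ∂μ := lintegral_indicator hN _
      _ ≤ ∫⁻ x in S, φ x ∂μ := lintegral_mono' (Measure.restrict_mono hNS le_rfl) le_rfl
      _ ≤ ∫⁻ x in S, g x ∂μ := lintegral_mono hφ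

/-- Superadditivity of the lower Lebesgue integral over finite sums. -/
lemma finset_sum_lintegral_le {α : Type*} [MeasurableSpace α] (μ : Measure α)
    {ι : Type*} (s : Finset ι) (g : ι → α → ℝ≥0∞) :
    ∑ i ∈ s, ∫⁻ x, g i x ∂μ ≤ ∫⁻ x, ∑ i ∈ s, g i x ∂μ := by
  classical
  induction s using Finset.induction_on with
  | empty => simp
  | @insert j s hj ih =>
    rw [Finset.sum_insert hj]
    calc ∫⁻ x, g j x ∂μ + ∑ i ∈ s, ∫⁻ x, g i x ∂μ
        ≤ ∫⁻ x, g j x ∂μ + ∫⁻ x, ∑ i ∈ s, g i x ∂μ := add_le_add le_rfl ih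
      _ ≤ ∫⁻ x, g j x + ∑ i ∈ s, g i x ∂μ := le_lintegral_add _ _
      _ = ∫⁻ x, ∑ i ∈ insert j s, g i x ∂μ := by
          congr 1; funext x; rw [Finset.sum_insert hj]

end AuxLintegral

section AuxCondOn
open MeasureTheory

lemma condOn_apply_meas {A S : Set TT} (Θ : Measure TT) (hS : MeasurableSet S) :
    condOn Θ A S = (Θ A)⁻¹ * Θ (S ∩ A) := by
  unfold condOn
  rw [Measure.smul_apply, Measure.restrict_apply hS, smul_eq_mul]

lemma condOn_apply_subset {A S : Set TT} (Θ : Measure TT) (hSA : S ⊆ A) :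
    condOn Θ A S = (Θ A)⁻¹ * Θ S := by
  unfold condOn
  rw [Measure.smul_apply, Measure.restrict_eq_self Θ hSA, smul_eq_mul]

lemma condOn_univ {A : Set TT} (Θ : Measure TT) (h0 : Θ A ≠ 0) (hfin : Θ A ≠ ∞) :
    condOn Θ A Set.univ = 1 := by
  unfold condOn
  rw [Measure.smul_apply, Measure.restrict_apply_univ, smul_eq_mul,
    ENNReal.inv_mul_cancel h0 hfin]

end AuxCondOn

section AuxIid
open MeasureTheory

lemma measurableSet_exists_mem {p : ℕ} {U : Set MT} (hU : MeasurableSet U) :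
    MeasurableSet {v : Fin p → MT | ∃ i, v i ∈ U} := by
  have : {v : Fin p → MT | ∃ i, v i ∈ U} = ⋃ i, (fun v : Fin p → MT => v i) ⁻¹' U := by
    ext v; simp
  rw [this]
  exact MeasurableSet.iUnion fun i => (measurable_pi_apply i) hU

lemma iid_compl_exists {p : ℕ} {U : Set MT} (hU : MeasurableSet U) (ν : Measure MT)
    [IsProbabilityMeasure ν] :
    (iidMeasure p ν) ({v : Fin p → MT | ∃ i, v i ∈ U}ᶜ) = (ν Uᶜ) ^ p := by
  have hset : {v : Fin p → MT | ∃ i, v i ∈ U}ᶜ = Set.pi Set.univ (fun _ : Fin p => Uᶜ) := by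
    ext v
    simp [Set.mem_pi, not_exists]
  rw [hset]
  unfold iidMeasure
  rw [MeasureTheory.Measure.pi_pi]
  simp [Finset.prod_const]

lemma ennreal_geom_sum {q r : ℝ≥0∞} (hqr : q + r = 1) (p : ℕ) :
    q * ∑ k ∈ Finset.range p, r ^ k + r ^ p = 1 := by
  induction p with
  | zero => simp
  | succ n ih =>
    rw [Finset.sum_range_succ, mul_add, pow_succ]
    calc q * ∑ k ∈ Finset.range n, r ^ k + q * r^n + r^n * r
        = q * ∑ k ∈ Finset.range n, r ^ k + (q + r) * r^n := by ring
      _ = q * ∑ k ∈ Finset.range n, r ^ k + r^n := by rw [hqr, one_mul]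
      _ = 1 := ih

/-- The geometric-sum formula for the probability that some coordinate lies in `U`. -/
lemma iid_exists_eq {p : ℕ} {U : Set MT} (hU : MeasurableSet U) (ν : Measure MT)
    [IsProbabilityMeasure ν] :
    (iidMeasure p ν) {v : Fin p → MT | ∃ i, v i ∈ U}
      = ν U * ∑ k ∈ Finset.range p, (ν Uᶜ) ^ k := by
  have hprob : (iidMeasure p ν) Set.univ = 1 := by
    unfold iidMeasure
    rw [MeasureTheory.Measure.pi_univ]
    simp
  have h1 : (iidMeasure p ν) {v : Fin p → MT | ∃ i, v i ∈ U} + (ν Uᶜ)^p = 1 := by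
    rw [← iid_compl_exists hU ν]
    rw [measure_add_measure_compl (measurableSet_exists_mem hU), hprob]
  have h2 : ν U * ∑ k ∈ Finset.range p, (ν Uᶜ) ^ k + (ν Uᶜ)^p = 1 := by
    apply ennreal_geom_sum
    rw [measure_add_measure_compl hU, measure_univ]
  have hfin : (ν Uᶜ)^p ≠ ∞ :=
    ne_top_of_le_ne_top ENNReal.one_ne_top (pow_le_one' prob_le_one p)
  have := h1.trans h2.symm
  rw [add_comm _ ((ν Uᶜ)^p), add_comm _ ((ν Uᶜ)^p)] at this
  exact (ENNReal.add_right_inj hfin).mp this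

lemma iid_exists_ge {p : ℕ} {U : Set MT} (hU : MeasurableSet U) (ν : Measure MT)
    [IsProbabilityMeasure ν] :
    (p : ℝ≥0∞) * ν U * (ν Uᶜ) ^ p
      ≤ (iidMeasure p ν) {v : Fin p → MT | ∃ i, v i ∈ U} := by
  rw [iid_exists_eq hU ν]
  have hsum : (p : ℝ≥0∞) * (ν Uᶜ) ^ p ≤ ∑ k ∈ Finset.range p, (ν Uᶜ) ^ k := by
    calc (p : ℝ≥0∞) * (ν Uᶜ) ^ p = ∑ _k ∈ Finset.range p, (ν Uᶜ) ^ p := by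
          simp [Finset.sum_const, nsmul_eq_mul]
      _ ≤ ∑ k ∈ Finset.range p, (ν Uᶜ) ^ k := by
          apply Finset.sum_le_sum
          intro k hk
          exact pow_le_pow_of_le_one zero_le prob_le_one
            (le_of_lt (Finset.mem_range.mp hk))
  calc (p : ℝ≥0∞) * ν U * (ν Uᶜ) ^ p = ν U * ((p : ℝ≥0∞) * (ν Uᶜ) ^ p) := by ring
    _ ≤ ν U * ∑ k ∈ Finset.range p, (ν Uᶜ) ^ k := mul_le_mul_right hsum _

end AuxIid

section AuxEndgame

lemma ennreal_one_le_pow_add (ε : ℝ≥0∞) (n : ℕ) : 1 ≤ (1 - ε) ^ n + n * ε := by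
  induction n with
  | zero => simp
  | succ n ih =>
    by_cases hε : ε ≤ 1
    · calc (1 : ℝ≥0∞) = (1 - ε) + ε := (tsub_add_cancel_of_le hε).symm
        _ ≤ ((1-ε)^n + n*ε) * (1 - ε) + ε := by
            apply add_le_add_left
            calc (1 : ℝ≥0∞) - ε = 1 * (1-ε) := (one_mul _).symm
              _ ≤ ((1-ε)^n + n*ε) * (1-ε) := mul_le_mul_left ih _
        _ = (1-ε)^(n+1) + (n*ε) * (1-ε) + ε := by rw [add_mul, pow_succ]
        _ ≤ (1-ε)^(n+1) + (n*ε) * 1 + ε := by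
            apply add_le_add_left
            apply add_le_add_right
            exact mul_le_mul_right (tsub_le_self) _
        _ = (1-ε)^(n+1) + (n+1 : ℕ) * ε := by
            push_cast
            ring
    · push_neg at hε
      calc (1 : ℝ≥0∞) ≤ (n+1 : ℕ) * ε := by
            have h1 : (1 : ℝ≥0∞) ≤ (n+1 : ℕ) := by
              simp
            calc (1:ℝ≥0∞) ≤ ε := hε.le
              _ = 1 * ε := (one_mul _).symm
              _ ≤ (n+1 : ℕ) * ε := mul_le_mul_left h1 _
        _ ≤ (1-ε)^(n+1) + (n+1 : ℕ) * ε := le_add_self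

lemma ennreal_endgame {B S : ℝ≥0∞} {n : ℕ}
    (H : ∀ ε : ℝ≥0∞, 0 < ε → ∃ r : ℝ≥0∞, 1 - ε ≤ r ∧ S * r ^ n ≤ B) : S ≤ B := by
  rcases Nat.eq_zero_or_pos n with h0 | hn
  · obtain ⟨r, _, hr2⟩ := H 1 one_pos
    subst h0
    simpa using hr2
  · apply ENNReal.le_of_forall_lt_one_mul_le
    intro a ha
    obtain ⟨r, hr1, hr2⟩ := H ((1 - a) / n) (ENNReal.div_pos (tsub_pos_of_lt ha).ne' (by simp))
    have hna : (n : ℝ≥0∞) * ((1 - a) / n) = 1 - a :=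
      ENNReal.mul_div_cancel (by exact_mod_cast hn.ne') (by simp)
    have hber : a ≤ (1 - (1 - a) / n) ^ n := by
      have h1 : (1 : ℝ≥0∞) ≤ (1 - (1-a)/n) ^ n + n * ((1-a)/n) := ennreal_one_le_pow_add _ n
      rw [hna] at h1
      have h2 : (1 : ℝ≥0∞) - (1 - a) ≤ (1 - (1-a)/n) ^ n := by
        rwa [tsub_le_iff_right]
      rwa [ENNReal.sub_sub_cancel ENNReal.one_ne_top ha.le] at h2
    have hrn : a ≤ r ^ n := hber.trans (pow_le_pow_left' hr1 n)
    calc a * S ≤ r ^ n * S := mul_le_mul_left hrn _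
      _ = S * r ^ n := mul_comm _ _
      _ ≤ B := hr2
end AuxEndgame
section MainAux
open MeasureTheory

/-- The event that some coordinate is a tree of `φ`-value at least `b`. -/
def vecEvent (b : ℝ) (p : ℕ) : Set (Fin p → MT) := {v | ∃ i, v i ∈ Ub b}

lemma measurableSet_vecEvent (b : ℝ) (p : ℕ) : MeasurableSet (vecEvent b p) :=
  measurableSet_exists_mem (measurableSet_Ub b)

/-- The symmetric measurable test functional. -/
def Fb (b : ℝ) (p : ℕ) : (Fin p → MT) → ℝ≥0∞ := (vecEvent b p).indicator 1

lemma Fb_measurable (b : ℝ) (p : ℕ) : Measurable (Fb b p) :=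
  measurable_one.indicator (measurableSet_vecEvent b p)

lemma Fb_symm (b : ℝ) (p : ℕ) (v : Fin p → MT) (π : Equiv.Perm (Fin p)) :
    Fb b p (v ∘ π) = Fb b p v := by
  have hiff : (v ∘ π) ∈ vecEvent b p ↔ v ∈ vecEvent b p := by
    constructor
    · rintro ⟨i, hi⟩; exact ⟨π i, hi⟩
    · rintro ⟨i, hi⟩; exact ⟨π.symm i, by simpa using hi⟩
  unfold Fb
  by_cases hv : v ∈ vecEvent b p
  · rw [Set.indicator_of_mem (hiff.mpr hv), Set.indicator_of_mem hv]; rfl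
  · rw [Set.indicator_of_notMem (fun hc => hv (hiff.mp hc)), Set.indicator_of_notMem hv]

/-- The integrand appearing on the left side of the regenerative identity. -/
def gb (t h b : ℝ) (p : ℕ) : TT → ℝ≥0∞ := fun T => Fb b p (subtreesVecT T t h p)

lemma gb_eq_zero {t : ℝ} (ht : t ≠ 0) (h : ℝ) {b : ℝ} (hb : 0 < b) {p : ℕ} {T : TT}
    (hT : ZT T t h ≠ p) : gb t h b p T = 0 := by
  apply Set.indicator_of_notMem
  rintro ⟨i, hi⟩
  simp only [Ub, Set.mem_setOf_eq] at hi
  rw [phiMT_subtreesVec_junk T ht h (Ne.symm hT) i] at hi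
  exact absurd hi (not_le.mpr hb)

lemma gb_le {t : ℝ} (ht : t ≠ 0) (h : ℝ) {b : ℝ} (hb : 0 < b) (p : ℕ) (T : TT) :
    gb t h b p T
      ≤ if p = ZT T t h then (Subtype.val ⁻¹' (Ub b)).indicator 1 T else 0 := by
  by_cases hp : p = ZT T t h
  · rw [if_pos hp]
    by_cases hvec : subtreesVecT T t h p ∈ vecEvent b p
    · obtain ⟨i, hi⟩ := hvec
      simp only [Ub, Set.mem_setOf_eq] at hi
      have hTub : T ∈ Subtype.val ⁻¹' (Ub b) := by
        simp only [Set.mem_preimage, Ub, Set.mem_setOf_eq]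
        exact hi.trans (phiMT_subtreesVec_le T t h p i)
      rw [Set.indicator_of_mem hTub]
      unfold gb Fb
      by_cases hv2 : subtreesVecT T t h p ∈ vecEvent b p
      · rw [Set.indicator_of_mem hv2]; rfl
      · rw [Set.indicator_of_notMem hv2]; exact zero_le
    · unfold gb Fb
      rw [Set.indicator_of_notMem hvec]
      exact zero_le
  · rw [if_neg hp, gb_eq_zero ht h hb (Ne.symm hp)]

lemma sum_gb_le {t : ℝ} (ht : t ≠ 0) (h : ℝ) {b : ℝ} (hb : 0 < b) (n : ℕ) (T : TT) :
    ∑ p ∈ Finset.range n, gb t h b p T ≤ (Subtype.val ⁻¹' (Ub b)).indicator 1 T := by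
  calc ∑ p ∈ Finset.range n, gb t h b p T
      ≤ ∑ p ∈ Finset.range n,
          (if p = ZT T t h then (Subtype.val ⁻¹' (Ub b)).indicator 1 T else 0) :=
        Finset.sum_le_sum fun p _ => gb_le ht h hb p T
    _ = if ZT T t h ∈ Finset.range n then (Subtype.val ⁻¹' (Ub b)).indicator 1 T else 0 :=
        Finset.sum_ite_eq' _ _ _
    _ ≤ (Subtype.val ⁻¹' (Ub b)).indicator 1 T := by
        split
        · exact le_rfl
        · exact zero_le

end MainAux

/-- **Proposition 3.2 (subcriticality).** Let `Θ` be an infinite measure on `𝕋` with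
`Θ(H(𝒯)=0) = 0` and `0 < Θ(H(𝒯)>t) < ∞` for every `t>0`, satisfying the regenerative
property (R), and set `v(t) = Θ(H(𝒯)>t)`. Then for every `t>0` and `h>0`,
`∫ Z(t,t+h)(𝒯) Θ(d𝒯) ≤ v(h)`. -/
theorem regenerative_mean_Z_le
    (Θ : MeasureTheory.Measure TT)
    (hinf : Θ Set.univ = ∞)
    (h0 : Θ { T | heightT T = 0 } = 0)
    (hv : ∀ t : ℝ, 0 < t → 0 < Θ { T | t < heightT T } ∧ Θ { T | t < heightT T } < ∞)
    (hreg : Regenerative Θ)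
    (t h : ℝ) (ht : 0 < t) (hh : 0 < h) :
    ∫⁻ T, (ZT T t h : ℝ≥0∞) ∂Θ ≤ Θ { T | h < heightT T } := by
  classical
  obtain ⟨hAt0, hAtfin⟩ := hv t ht
  obtain ⟨hAh0, hAhfin⟩ := hv h hh
  set At : Set TT := { T | t < heightT T } with hAtdef
  set Ah : Set TT := { T | h < heightT T } with hAhdef
  set ν' : MeasureTheory.Measure MT := (condOn Θ Ah).map Subtype.val with hνdef
  -- ν' is a probability measure
  have hν_univ : ν' Set.univ = 1 := by
    rw [hνdef, MeasureTheory.Measure.map_apply measurable_subtype_coe MeasurableSet.univ,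
      Set.preimage_univ]
    exact condOn_univ Θ hAh0.ne' hAhfin.ne
  haveI hνprob : MeasureTheory.IsProbabilityMeasure ν' := ⟨hν_univ⟩
  -- the tall events are supported on `At` (for `p ≥ 1`) resp. `Ah`
  have hEsub : ∀ p : ℕ, p ≠ 0 → {T : TT | ZT T t h = p} ⊆ At := by
    intro p hp T hT
    simp only [Set.mem_setOf_eq] at hT
    have hT' : (bigComps T.1.out t h).ncard = p := by
      rw [← ZT_eq_ncard T ht.ne' h]; exact hT
    have hne : (bigComps T.1.out t h).Nonempty :=
      Set.nonempty_of_ncard_ne_zero (by rw [hT']; exact hp)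
    obtain ⟨C, hC⟩ := hne
    obtain ⟨σ, hσ, -⟩ := hC.1
    simp only [levelGT, Set.mem_setOf_eq] at hσ
    have : t < heightT T := lt_of_lt_of_le hσ (PCMS.dist_root_le_height _ σ)
    exact this
  have hUbAh : ∀ b : ℝ, h < b → (Subtype.val ⁻¹' Ub b : Set TT) ⊆ Ah := by
    intro b hb T hT
    simp only [Set.mem_preimage, Ub, Set.mem_setOf_eq] at hT
    have : h < heightT T := lt_of_lt_of_le hb (hT.trans (phiMT_le_height T))
    exact this
  -- value of the conditioned measure of the tall event
  have hq_eq : ∀ b : ℝ, h < b →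
      Θ (Subtype.val ⁻¹' Ub b) = Θ Ah * ν' (Ub b) := by
    intro b hb
    rw [hνdef, MeasureTheory.Measure.map_apply measurable_subtype_coe (measurableSet_Ub b),
      condOn_apply_subset Θ (hUbAh b hb), ← mul_assoc,
      ENNReal.mul_inv_cancel hAh0.ne' hAhfin.ne, one_mul]
  -- positivity of the tall event
  have hq_pos : ∀ b : ℝ, h < b → ν' (Ub b) ≠ 0 := by
    intro b hb hq0
    have hsub2b : {T : TT | 2*b < heightT T} ⊆ (Subtype.val ⁻¹' Ub b : Set TT) := by
      intro T hT
      simp only [Set.mem_setOf_eq] at hT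
      simp only [Set.mem_preimage, Ub, Set.mem_setOf_eq]
      have := half_height_le_phiMT T
      linarith
    have hpos : 0 < Θ {T : TT | 2*b < heightT T} := (hv (2*b) (by linarith)).1
    have : Θ (Subtype.val ⁻¹' Ub b : Set TT) = 0 := by
      rw [hq_eq b hb, hq0, mul_zero]
    exact absurd ((measure_mono hsub2b).trans (le_of_eq this)) (not_le.mpr hpos)
  -- the regenerative identity in the form we use
  have hR : ∀ b : ℝ, h < b → ∀ p : ℕ,
      ∫⁻ T, gb t h b p T ∂(condOn Θ At)
        = condOn Θ At {T : TT | ZT T t h = p}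
            * (iidMeasure p ν') (vecEvent b p) := by
    intro b hb p
    have h1 := hreg t h ht hh p (Fb b p) (Fb_measurable b p) (Fb_symm b p)
    have h2 : ∫⁻ T in {T : TT | ZT T t h = p}, Fb b p (subtreesVecT T t h p)
          ∂(condOn Θ At) = ∫⁻ T, gb t h b p T ∂(condOn Θ At) := by
      exact lintegral_restrict_of_support (condOn Θ At)
        (fun T hT => gb_eq_zero ht.ne' h (hh.trans hb) (fun hc => hT hc))
    have h3 : ∫⁻ v, Fb b p v ∂(iidMeasure p ν')
        = (iidMeasure p ν') (vecEvent b p) :=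
      MeasureTheory.lintegral_indicator_one (measurableSet_vecEvent b p)
    rw [h2, h3] at h1
    exact h1
  -- key inequality for every threshold b and truncation n
  have key : ∀ b : ℝ, h < b → ∀ n : ℕ,
      (∑ p ∈ Finset.range n, (p : ℝ≥0∞) * condOn Θ At {T : TT | ZT T t h = p})
          * (ν' (Ub b)ᶜ) ^ n ≤ (Θ At)⁻¹ * Θ Ah := by
    intro b hb n
    have step1 : ∑ p ∈ Finset.range n,
        condOn Θ At {T : TT | ZT T t h = p} * (iidMeasure p ν') (vecEvent b p)
        ≤ (Θ At)⁻¹ * (Θ Ah * ν' (Ub b)) := by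
      calc ∑ p ∈ Finset.range n,
            condOn Θ At {T : TT | ZT T t h = p} * (iidMeasure p ν') (vecEvent b p)
          = ∑ p ∈ Finset.range n, ∫⁻ T, gb t h b p T ∂(condOn Θ At) := by
            refine Finset.sum_congr rfl fun p _ => ?_
            exact (hR b hb p).symm
        _ ≤ ∫⁻ T, ∑ p ∈ Finset.range n, gb t h b p T ∂(condOn Θ At) :=
            finset_sum_lintegral_le _ _ _
        _ ≤ ∫⁻ T, (Subtype.val ⁻¹' Ub b : Set TT).indicator 1 T ∂(condOn Θ At) :=
            MeasureTheory.lintegral_mono fun T => sum_gb_le ht.ne' h (hh.trans hb) n T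
        _ = condOn Θ At (Subtype.val ⁻¹' Ub b : Set TT) :=
            MeasureTheory.lintegral_indicator_one
              (measurable_subtype_coe (measurableSet_Ub b))
        _ ≤ (Θ At)⁻¹ * (Θ Ah * ν' (Ub b)) := by
            rw [condOn_apply_meas Θ (measurable_subtype_coe (measurableSet_Ub b)),
              ← hq_eq b hb]
            exact mul_le_mul_right (measure_mono Set.inter_subset_left) _
    have step2 : ∑ p ∈ Finset.range n,
        ((p : ℝ≥0∞) * condOn Θ At {T : TT | ZT T t h = p} * (ν' (Ub b)ᶜ) ^ p) * ν' (Ub b)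
        ≤ ∑ p ∈ Finset.range n,
        condOn Θ At {T : TT | ZT T t h = p} * (iidMeasure p ν') (vecEvent b p) := by
      refine Finset.sum_le_sum fun p _ => ?_
      have := iid_exists_ge (p := p) (measurableSet_Ub b) ν'
      calc (p : ℝ≥0∞) * condOn Θ At {T : TT | ZT T t h = p} * (ν' (Ub b)ᶜ) ^ p * ν' (Ub b)
          = condOn Θ At {T : TT | ZT T t h = p}
            * ((p : ℝ≥0∞) * ν' (Ub b) * (ν' (Ub b)ᶜ) ^ p) := by ring
        _ ≤ condOn Θ At {T : TT | ZT T t h = p} * (iidMeasure p ν') (vecEvent b p) :=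
            mul_le_mul_right this _
    have step3 : (∑ p ∈ Finset.range n,
        (p : ℝ≥0∞) * condOn Θ At {T : TT | ZT T t h = p} * (ν' (Ub b)ᶜ) ^ p) * ν' (Ub b)
        ≤ ((Θ At)⁻¹ * Θ Ah) * ν' (Ub b) := by
      rw [Finset.sum_mul]
      calc ∑ p ∈ Finset.range n,
          (p : ℝ≥0∞) * condOn Θ At {T : TT | ZT T t h = p} * (ν' (Ub b)ᶜ) ^ p * ν' (Ub b)
          ≤ ∑ p ∈ Finset.range n,
            condOn Θ At {T : TT | ZT T t h = p} * (iidMeasure p ν') (vecEvent b p) := step2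
        _ ≤ (Θ At)⁻¹ * (Θ Ah * ν' (Ub b)) := step1
        _ = ((Θ At)⁻¹ * Θ Ah) * ν' (Ub b) := by ring
    have hcancel : ∑ p ∈ Finset.range n,
        (p : ℝ≥0∞) * condOn Θ At {T : TT | ZT T t h = p} * (ν' (Ub b)ᶜ) ^ p
        ≤ (Θ At)⁻¹ * Θ Ah := by
      have hfin : ν' (Ub b) ≠ ∞ :=
        ne_top_of_le_ne_top ENNReal.one_ne_top MeasureTheory.prob_le_one
      exact (ENNReal.mul_le_mul_iff_left (hq_pos b hb) hfin).mp step3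
    calc (∑ p ∈ Finset.range n, (p : ℝ≥0∞) * condOn Θ At {T : TT | ZT T t h = p})
          * (ν' (Ub b)ᶜ) ^ n
        = ∑ p ∈ Finset.range n,
          (p : ℝ≥0∞) * condOn Θ At {T : TT | ZT T t h = p} * (ν' (Ub b)ᶜ) ^ n := by
          rw [Finset.sum_mul]
      _ ≤ ∑ p ∈ Finset.range n,
          (p : ℝ≥0∞) * condOn Θ At {T : TT | ZT T t h = p} * (ν' (Ub b)ᶜ) ^ p := by
          refine Finset.sum_le_sum fun p hp => ?_
          exact mul_le_mul_right
            (pow_le_pow_of_le_one zero_le MeasureTheory.prob_le_one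
              (le_of_lt (Finset.mem_range.mp hp))) _
      _ ≤ (Θ At)⁻¹ * Θ Ah := hcancel
  -- thresholds with small tall-probability exist
  have hsmall : ∀ ε : ℝ≥0∞, 0 < ε → ∃ b : ℝ, h < b ∧ ν' (Ub b) ≤ ε := by
    intro ε hε
    have hinter : ⋂ m : ℕ, (Subtype.val ⁻¹' Ub (h + 1 + m) : Set TT) = ∅ := by
      ext T
      simp only [Set.mem_iInter, Set.mem_empty_iff_false, iff_false, not_forall]
      obtain ⟨m, hm⟩ := exists_nat_gt (phiMT T.1 - h - 1)
      refine ⟨m, ?_⟩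
      simp only [Set.mem_preimage, Ub, Set.mem_setOf_eq, not_le]
      linarith
    have hmeas : ∀ m : ℕ, MeasurableSet (Subtype.val ⁻¹' Ub (h+1+m) : Set TT) :=
      fun m => measurable_subtype_coe (measurableSet_Ub _)
    have hdir : Directed (· ⊇ ·) (fun m : ℕ => (Subtype.val ⁻¹' Ub (h+1+m) : Set TT)) := by
      intro m m'
      refine ⟨max m m', Set.preimage_mono (Ub_antitone ?_), Set.preimage_mono (Ub_antitone ?_)⟩
      · have : (m : ℝ) ≤ ((max m m' : ℕ) : ℝ) := by exact_mod_cast le_max_left m m'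
        linarith
      · have : (m' : ℝ) ≤ ((max m m' : ℕ) : ℝ) := by exact_mod_cast le_max_right m m'
        linarith
    have hfin : ∃ m : ℕ, Θ (Subtype.val ⁻¹' Ub (h+1+(m:ℕ)) : Set TT) ≠ ∞ := by
      refine ⟨0, ?_⟩
      have hsub : (Subtype.val ⁻¹' Ub (h+1+(0:ℕ)) : Set TT) ⊆ Ah := hUbAh _ (by norm_num)
      exact ((measure_mono hsub).trans_lt hAhfin).ne
    have h0' := Directed.measure_iInter (μ := Θ) (fun m => (hmeas m).nullMeasurableSet)
      hdir hfin
    rw [hinter, measure_empty] at h0'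
    have hpos : 0 < Θ Ah * ε := ENNReal.mul_pos hAh0.ne' hε.ne'
    have hex : ∃ m : ℕ, Θ (Subtype.val ⁻¹' Ub (h+1+m) : Set TT) < Θ Ah * ε := by
      by_contra hcon
      push_neg at hcon
      have hle : Θ Ah * ε ≤ ⨅ m : ℕ, Θ (Subtype.val ⁻¹' Ub (h+1+m) : Set TT) :=
        le_iInf hcon
      rw [← h0'] at hle
      exact absurd hle (not_le.mpr hpos)
    obtain ⟨m, hm⟩ := hex
    have hb : h < h + 1 + (m:ℝ) := by
      have : (0:ℝ) ≤ m := Nat.cast_nonneg m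
      linarith
    refine ⟨h + 1 + (m:ℝ), hb, ?_⟩
    have h1 : Θ Ah * ν' (Ub (h+1+(m:ℝ))) < Θ Ah * ε := by
      rw [← hq_eq _ hb]
      exact hm
    exact le_of_lt ((ENNReal.mul_lt_mul_iff_right hAh0.ne' hAhfin.ne).mp h1)
  -- partial sums are bounded by B
  have hSn : ∀ n : ℕ,
      ∑ p ∈ Finset.range n, (p : ℝ≥0∞) * condOn Θ At {T : TT | ZT T t h = p}
        ≤ (Θ At)⁻¹ * Θ Ah := by
    intro n
    apply ennreal_endgame (n := n)
    intro ε hε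
    obtain ⟨b, hb, hqε⟩ := hsmall ε hε
    refine ⟨ν' (Ub b)ᶜ, ?_, key b hb n⟩
    have h1 : ν' (Ub b) + ν' (Ub b)ᶜ = 1 := by
      rw [MeasureTheory.measure_add_measure_compl (measurableSet_Ub b),
        MeasureTheory.measure_univ]
    rw [tsub_le_iff_left]
    calc (1 : ℝ≥0∞) = ν' (Ub b) + ν' (Ub b)ᶜ := h1.symm
      _ ≤ ε + ν' (Ub b)ᶜ := add_le_add_left hqε _
  -- the hull bound for the lower integral
  have hull : ∫⁻ T, (ZT T t h : ℝ≥0∞) ∂Θ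
      ≤ ∑' p : ℕ, (p : ℝ≥0∞) * Θ {T : TT | ZT T t h = p} := by
    calc ∫⁻ T, (ZT T t h : ℝ≥0∞) ∂Θ
        ≤ ∫⁻ T, ∑' p : ℕ,
            (MeasureTheory.toMeasurable Θ {T' : TT | ZT T' t h = p}).indicator
              (fun _ => (p:ℝ≥0∞)) T ∂Θ := by
          apply MeasureTheory.lintegral_mono
          intro T
          have hmem : T ∈ MeasureTheory.toMeasurable Θ {T' : TT | ZT T' t h = ZT T t h} :=
            MeasureTheory.subset_toMeasurable _ _ rfl
          calc (ZT T t h : ℝ≥0∞)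
              = (MeasureTheory.toMeasurable Θ {T' : TT | ZT T' t h = ZT T t h}).indicator
                  (fun _ => ((ZT T t h : ℕ) : ℝ≥0∞)) T := by
                rw [Set.indicator_of_mem hmem]
            _ ≤ ∑' p : ℕ,
                (MeasureTheory.toMeasurable Θ {T' : TT | ZT T' t h = p}).indicator
                  (fun _ => (p:ℝ≥0∞)) T := ENNReal.le_tsum (ZT T t h)
      _ = ∑' p : ℕ, (p:ℝ≥0∞) * Θ (MeasureTheory.toMeasurable Θ {T' : TT | ZT T' t h = p}) := by
          rw [MeasureTheory.lintegral_tsum (fun p =>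
            ((measurable_const).indicator
              (MeasureTheory.measurableSet_toMeasurable _ _)).aemeasurable)]
          refine tsum_congr fun p => ?_
          exact MeasureTheory.lintegral_indicator_const
            (MeasureTheory.measurableSet_toMeasurable _ _) _
      _ = ∑' p : ℕ, (p:ℝ≥0∞) * Θ {T : TT | ZT T t h = p} := by
          refine tsum_congr fun p => ?_
          rw [MeasureTheory.measure_toMeasurable]
  -- convert to the conditioned measure
  have hconv : ∀ p : ℕ, (p:ℝ≥0∞) * Θ {T : TT | ZT T t h = p}
      = Θ At * ((p:ℝ≥0∞) * condOn Θ At {T : TT | ZT T t h = p}) := by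
    intro p
    rcases Nat.eq_zero_or_pos p with rfl | hp
    · simp
    · rw [condOn_apply_subset Θ (hEsub p hp.ne')]
      calc (p:ℝ≥0∞) * Θ {T : TT | ZT T t h = p}
          = (Θ At * (Θ At)⁻¹) * ((p:ℝ≥0∞) * Θ {T : TT | ZT T t h = p}) := by
            rw [ENNReal.mul_inv_cancel hAt0.ne' hAtfin.ne, one_mul]
        _ = Θ At * ((p:ℝ≥0∞) * ((Θ At)⁻¹ * Θ {T : TT | ZT T t h = p})) := by ring
  calc ∫⁻ T, (ZT T t h : ℝ≥0∞) ∂Θ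
      ≤ ∑' p : ℕ, (p : ℝ≥0∞) * Θ {T : TT | ZT T t h = p} := hull
    _ = Θ At * ∑' p : ℕ, (p : ℝ≥0∞) * condOn Θ At {T : TT | ZT T t h = p} := by
        rw [← ENNReal.tsum_mul_left]
        exact tsum_congr hconv
    _ = Θ At * ⨆ n : ℕ, ∑ p ∈ Finset.range n,
          (p : ℝ≥0∞) * condOn Θ At {T : TT | ZT T t h = p} := by
        rw [ENNReal.tsum_eq_iSup_nat]
    _ ≤ Θ At * ((Θ At)⁻¹ * Θ Ah) := mul_le_mul_right (iSup_le hSn) _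
    _ = Θ Ah := by
        rw [← mul_assoc, ENNReal.mul_inv_cancel hAt0.ne' hAtfin.ne, one_mul]
end
end
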